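/- arXiv:1512.01764 — 11 statements merged into one kernel-verified Lean document; each statement's English description precedes it below -/
import Mathlib

section
/- Let A be a finite set of players, let P, Q ⊆ A be disjoint subsets with p = |P| ≥ 1 and q = |Q|, and let V ∈ ℝ. Define the characteristic function ν : 2^A → ℝ by ν(C) = V if P ⊆ C and Q ∩ C = ∅, and ν(C) = 0 otherwise. Then the Shapley value of every player a_i ∈ P equals V / (p · C(p+q, q)), and, if q ≥ 1, the Shapley value of every player a_j ∈ Q equals −V / (q · C(p+q, p)), where C(·,·) denotes the binomial coefficient. -/
open Finset

/-- The Shapley value of player `i` in the coalitional game with characteristic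
function `ν` on the finite player set `α`. -/
noncomputable def shapley {α : Type*} [Fintype α] [DecidableEq α]
    (ν : Finset α → ℝ) (i : α) : ℝ :=
  ∑ C ∈ (Finset.univ.erase i).powerset,
    ((C.card.factorial * (Fintype.card α - C.card - 1).factorial : ℝ) /
        ((Fintype.card α).factorial : ℝ)) * (ν (insert i C) - ν C)

open PowerSeries in
private lemma key_conv (a b t : ℕ) :
    ∑ k ∈ range (t+1), ((a+k).choose a : ℝ) * ((b+(t-k)).choose b : ℝ)
      = ((a+b+1+t).choose (a+b+1) : ℝ) := by
  have h : (invOneSubPow ℝ (a+1)) * (invOneSubPow ℝ (b+1)) = invOneSubPow ℝ (a+b+2) := by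
    rw [invOneSubPow_eq_inv_one_sub_pow, invOneSubPow_eq_inv_one_sub_pow,
      invOneSubPow_eq_inv_one_sub_pow, ← pow_add]
    ring_nf
  have h2 := congrArg (fun u => (PowerSeries.coeff t) u.val) h
  simp only [Units.val_mul, invOneSubPow_val_succ_eq_mk_add_choose, coeff_mul, coeff_mk] at h2
  rw [Finset.Nat.sum_antidiagonal_eq_sum_range_succ_mk] at h2
  exact h2

private lemma sum_id (a b t : ℕ) :
    ∑ k ∈ range (t+1), (t.choose k : ℝ) * (a+k).factorial * (b+(t-k)).factorial
      = (a.factorial : ℝ) * b.factorial * t.factorial * ((a+b+1+t).choose (a+b+1)) := by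
  have : ∀ k ∈ range (t+1), (t.choose k : ℝ) * (a+k).factorial * (b+(t-k)).factorial
      = (a.factorial : ℝ) * b.factorial * t.factorial *
        (((a+k).choose a : ℝ) * ((b+(t-k)).choose b : ℝ)) := by
    intro k hk
    have hk' : k ≤ t := Nat.lt_succ_iff.mp (mem_range.mp hk)
    have e1 : (a+k).choose a * a.factorial * k.factorial = (a+k).factorial := by
      have := Nat.choose_mul_factorial_mul_factorial (Nat.le_add_right a k)
      simpa [Nat.add_sub_cancel_left] using this
    have e2 : (b+(t-k)).choose b * b.factorial * (t-k).factorial = (b+(t-k)).factorial := by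
      have := Nat.choose_mul_factorial_mul_factorial (Nat.le_add_right b (t-k))
      simpa [Nat.add_sub_cancel_left] using this
    have e3 : t.choose k * k.factorial * (t-k).factorial = t.factorial :=
      Nat.choose_mul_factorial_mul_factorial hk'
    rw [← e1, ← e2, ← e3]
    push_cast
    ring
  rw [sum_congr rfl this, ← mul_sum, key_conv]

private lemma helper {α : Type*} [Fintype α] [DecidableEq α] (x : α) (R Q' : Finset α)
    (hxR : x ∉ R) (hxQ : x ∉ Q') (hRQ : Disjoint R Q') (g : ℕ → ℝ) :
    ∑ C ∈ (Finset.univ.erase x).powerset,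
      (if R ⊆ C ∧ Disjoint Q' C then g C.card else 0)
    = ∑ k ∈ range ((Fintype.card α - R.card - Q'.card - 1) + 1),
        (((Fintype.card α - R.card - Q'.card - 1).choose k : ℝ)) * g (R.card + k) := by
  classical
  set T : Finset α := Finset.univ \ (insert x (R ∪ Q')) with hT
  have hTcard : T.card = Fintype.card α - R.card - Q'.card - 1 := by
    rw [hT, card_sdiff_of_subset (subset_univ _), card_univ, card_insert_of_notMem (by simp [hxR, hxQ]),
      card_union_of_disjoint hRQ]
    omega
  rw [← sum_filter]
  rw [show (filter (fun C => R ⊆ C ∧ Disjoint Q' C) (Finset.univ.erase x).powerset) =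
      T.powerset.image (fun D => R ∪ D) from ?_, sum_image ?_]
  · rw [sum_powerset]
    rw [hTcard]
    refine sum_congr rfl fun k hk => ?_
    have : ∀ D ∈ powersetCard k T, g ((R ∪ D).card) = g (R.card + k) := by
      intro D hD
      obtain ⟨hDT, hDcard⟩ := mem_powersetCard.mp hD
      have hdisj : Disjoint R D := by
        refine Finset.disjoint_left.mpr fun a haR haD => ?_
        have := hDT haD
        simp [hT] at this
        exact this.2.1 haR
      rw [card_union_of_disjoint hdisj, hDcard]
    rw [sum_congr rfl this, sum_const, card_powersetCard, hTcard, nsmul_eq_mul]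
  · intro D1 hD1 D2 hD2 h
    have key : ∀ D ∈ T.powerset, (R ∪ D) \ R = D := by
      intro D hD
      rw [union_sdiff_cancel_left]
      refine Finset.disjoint_left.mpr fun a haR haD => ?_
      have := (mem_powerset.mp hD) haD
      simp [hT] at this
      exact this.2.1 haR
    rw [← key D1 hD1, ← key D2 hD2, show R ∪ D1 = R ∪ D2 from h]
  · ext C
    simp only [mem_filter, mem_powerset, mem_image]
    constructor
    · rintro ⟨hCx, hRC, hQC⟩
      refine ⟨C \ R, ?_, Finset.union_sdiff_of_subset hRC⟩
      · intro a ha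
        simp only [mem_sdiff] at ha
        obtain ⟨haC, haR⟩ := ha
        simp only [hT, mem_sdiff, mem_univ, mem_insert, mem_union, true_and]
        push_neg
        exact ⟨fun h => (mem_erase.mp (hCx haC)).1 h,
          haR, fun h => disjoint_left.mp hQC h haC⟩
    · rintro ⟨D, hDT, rfl⟩
      refine ⟨?_, subset_union_left, ?_⟩
      · intro a ha
        rw [mem_erase]
        rcases mem_union.mp ha with h | h
        · exact ⟨fun he => hxR (he ▸ h), mem_univ a⟩
        · have := hDT h; simp [hT] at this
          exact ⟨fun he => this.1 he, mem_univ a⟩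
      · rw [disjoint_union_right]
        refine ⟨hRQ.symm, disjoint_left.mpr fun a haQ haD => ?_⟩
        have := hDT haD; simp [hT] at this
        exact this.2.2 haQ


/-- For the MC-net rule game `ν(C) = V` if `P ⊆ C` and `Q ∩ C = ∅` (else `0`), the
Shapley value of every player in `P` is `V / (p·C(p+q,q))` and, when `q ≥ 1`, the
Shapley value of every player in `Q` is `−V / (q·C(p+q,p))`. -/
theorem mcnet_rule_shapley {α : Type*} [Fintype α] [DecidableEq α]
    (P Q : Finset α) (hPQ : Disjoint P Q) (hP : 1 ≤ P.card) (V : ℝ)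
    (ν : Finset α → ℝ)
    (hν : ∀ C : Finset α, ν C = if P ⊆ C ∧ Disjoint Q C then V else 0) :
    (∀ i ∈ P, shapley ν i
        = V / ((P.card : ℝ) * (Nat.choose (P.card + Q.card) Q.card : ℝ))) ∧
    (1 ≤ Q.card → ∀ j ∈ Q, shapley ν j
        = -V / ((Q.card : ℝ) * (Nat.choose (P.card + Q.card) P.card : ℝ))) := by
  classical
  set n := Fintype.card α with hn
  set p := P.card with hp
  set q := Q.card with hq
  have hpq : p + q ≤ n := by
    have := Finset.card_le_univ (P ∪ Q)
    rwa [card_union_of_disjoint hPQ] at this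
  set t := n - p - q with ht
  have htn : n = p + q + t := by omega
  have hfact : ∀ m : ℕ, (m.factorial : ℝ) ≠ 0 := fun m => by positivity
  constructor
  · intro i hi
    have hiQ : i ∉ Q := disjoint_left.mp hPQ hi
    obtain ⟨a, ha⟩ : ∃ a, p = a + 1 := ⟨p - 1, by omega⟩
    have hRcard : (P.erase i).card = a := by rw [card_erase_of_mem hi]; omega
    have step : shapley ν i = ∑ C ∈ (Finset.univ.erase i).powerset,
        (if P.erase i ⊆ C ∧ Disjoint Q C then
          ((C.card.factorial * (n - C.card - 1).factorial : ℝ) / (n.factorial : ℝ)) * V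
        else 0) := by
      refine sum_congr rfl fun C hC => ?_
      have hiC : i ∉ C := fun h => (mem_erase.mp ((mem_powerset.mp hC) h)).1 rfl
      have hν1 : ν C = 0 := by
        rw [hν C, if_neg]; rintro ⟨h1, -⟩; exact hiC (h1 hi)
      have hν2 : ν (insert i C) =
          if P.erase i ⊆ C ∧ Disjoint Q C then V else 0 := by
        rw [hν (insert i C)]
        congr 1
        rw [Finset.subset_insert_iff, Finset.disjoint_insert_right, eq_iff_iff]
        tauto
      rw [hν1, hν2, sub_zero]
      split_ifs <;> ring
    rw [step, helper i (P.erase i) Q (notMem_erase i P) hiQ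
        (disjoint_of_subset_left (erase_subset i P) hPQ)
        (fun c => ((c.factorial * (n - c - 1).factorial : ℝ) / (n.factorial : ℝ)) * V),
      hRcard]
    have hidx : n - a - q - 1 = t := by omega
    rw [hidx]
    have step2 : ∀ k ∈ range (t+1),
        ((t.choose k : ℝ)) * ((((a+k).factorial * (n - (a+k) - 1).factorial : ℝ)
            / (n.factorial : ℝ)) * V)
        = ((t.choose k : ℝ) * (a+k).factorial * (q+(t-k)).factorial) * V / n.factorial := by
      intro k hk
      have hk' : k ≤ t := Nat.lt_succ_iff.mp (mem_range.mp hk)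
      have : n - (a+k) - 1 = q + (t-k) := by omega
      rw [this]; ring
    rw [sum_congr rfl step2, ← sum_div, ← sum_mul, sum_id]
    have haq : a + q + 1 = p + q := by omega
    have haqt : p + q + t = n := by omega
    rw [haq, haqt]
    have f1 : (n.choose (p+q)) * (p+q).factorial * t.factorial = n.factorial := by
      have := Nat.choose_mul_factorial_mul_factorial hpq
      rwa [show n - (p+q) = t by omega] at this
    have f2 : ((p+q).choose q) * q.factorial * p.factorial = (p+q).factorial := by
      have := Nat.choose_mul_factorial_mul_factorial (Nat.le_add_left q p)
      rwa [Nat.add_sub_cancel] at this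
    have f3 : p.factorial = p * a.factorial := by rw [ha, Nat.factorial_succ]
    have hchoose_ne : ((p+q).choose q : ℝ) ≠ 0 := by
      have := Nat.choose_pos (Nat.le_add_left q p)
      positivity
    have hp_ne : (p : ℝ) ≠ 0 := by
      have : 0 < p := hP
      exact Nat.cast_ne_zero.mpr this.ne'
    rw [div_eq_div_iff (hfact n) (mul_ne_zero hp_ne hchoose_ne)]
    have f2' : ((p+q).choose q) * q.factorial * (p * a.factorial) = (p+q).factorial := by
      rw [← f3]; exact f2
    have F1 : ((n.choose (p+q) : ℝ)) * ((p+q).factorial) * (t.factorial) = n.factorial := by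
      exact_mod_cast f1
    have F2 : (((p+q).choose q : ℝ)) * (q.factorial) * ((p:ℝ) * a.factorial)
        = ((p+q).factorial : ℝ) := by exact_mod_cast f2'
    linear_combination (V * (t.factorial:ℝ) * (n.choose (p+q))) * F2 + V * F1
  · intro hQ j hj
    have hjP : j ∉ P := fun h => disjoint_left.mp hPQ h hj
    obtain ⟨b, hb⟩ : ∃ b, q = b + 1 := ⟨q - 1, by omega⟩
    have hQcard : (Q.erase j).card = b := by rw [card_erase_of_mem hj]; omega
    have step : shapley ν j = ∑ C ∈ (Finset.univ.erase j).powerset,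
        (if P ⊆ C ∧ Disjoint (Q.erase j) C then
          ((C.card.factorial * (n - C.card - 1).factorial : ℝ) / (n.factorial : ℝ)) * (-V)
        else 0) := by
      refine sum_congr rfl fun C hC => ?_
      have hjC : j ∉ C := fun h => (mem_erase.mp ((mem_powerset.mp hC) h)).1 rfl
      have hν1 : ν (insert j C) = 0 := by
        rw [hν (insert j C), if_neg]
        rintro ⟨-, h2⟩
        exact disjoint_left.mp h2 hj (mem_insert_self j C)
      have hν2 : ν C = if P ⊆ C ∧ Disjoint (Q.erase j) C then V else 0 := by
        rw [hν C]
        congr 1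
        rw [eq_iff_iff]
        constructor
        · rintro ⟨h1, h2⟩; exact ⟨h1, disjoint_of_subset_left (erase_subset j Q) h2⟩
        · rintro ⟨h1, h2⟩
          refine ⟨h1, ?_⟩
          rw [← Finset.insert_erase hj, Finset.disjoint_insert_left]
          exact ⟨hjC, h2⟩
      rw [hν1, hν2, zero_sub]
      split_ifs <;> ring
    rw [step, helper j P (Q.erase j) hjP (notMem_erase j Q)
        (disjoint_of_subset_right (erase_subset j Q) hPQ)
        (fun c => ((c.factorial * (n - c - 1).factorial : ℝ) / (n.factorial : ℝ)) * (-V)),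
      hQcard]
    have hidx : n - p - b - 1 = t := by omega
    rw [hidx]
    have step2 : ∀ k ∈ range (t+1),
        ((t.choose k : ℝ)) * ((((p+k).factorial * (n - (p+k) - 1).factorial : ℝ)
            / (n.factorial : ℝ)) * (-V))
        = ((t.choose k : ℝ) * (p+k).factorial * (b+(t-k)).factorial) * (-V) / n.factorial := by
      intro k hk
      have hk' : k ≤ t := Nat.lt_succ_iff.mp (mem_range.mp hk)
      have : n - (p+k) - 1 = b + (t-k) := by omega
      rw [this]; ring
    rw [sum_congr rfl step2, ← sum_div, ← sum_mul, sum_id]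
    have hbq : p + b + 1 = p + q := by omega
    have hbqt : p + q + t = n := by omega
    rw [hbq, hbqt]
    have f1 : (n.choose (p+q)) * (p+q).factorial * t.factorial = n.factorial := by
      have := Nat.choose_mul_factorial_mul_factorial hpq
      rwa [show n - (p+q) = t by omega] at this
    have f2 : ((p+q).choose p) * p.factorial * q.factorial = (p+q).factorial := by
      have := Nat.choose_mul_factorial_mul_factorial (Nat.le_add_right p q)
      rwa [Nat.add_sub_cancel_left] at this
    have f3 : q.factorial = q * b.factorial := by rw [hb, Nat.factorial_succ]
    have hchoose_ne : ((p+q).choose p : ℝ) ≠ 0 := by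
      have := Nat.choose_pos (Nat.le_add_right p q)
      positivity
    have hq_ne : (q : ℝ) ≠ 0 := by
      have : 0 < q := hQ
      exact Nat.cast_ne_zero.mpr this.ne'
    rw [div_eq_div_iff (hfact n) (mul_ne_zero hq_ne hchoose_ne)]
    have f2' : ((p+q).choose p) * p.factorial * (q * b.factorial) = (p+q).factorial := by
      rw [← f3]; exact f2
    have F1 : ((n.choose (p+q) : ℝ)) * ((p+q).factorial) * (t.factorial) = n.factorial := by
      exact_mod_cast f1
    have F2 : (((p+q).choose p : ℝ)) * (p.factorial) * ((q:ℝ) * b.factorial)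
        = ((p+q).factorial : ℝ) := by exact_mod_cast f2'
    linear_combination (-V * (t.factorial:ℝ) * (n.choose (p+q))) * F2 + (-V) * F1
end

section
/- Let G = (V, E) be a finite simple undirected graph and define ν₁ : 2^V → ℝ by ν₁(C) = |C ∪ N(C)| (the number of vertices that are in C or adjacent to C), so ν₁(∅) = 0. Then for every v ∈ V, the Shapley value of v in the game (V, ν₁) equals Σ_{u ∈ N(v) ∪ {v}} 1 / (1 + deg(u)). -/
open Finset

/-- Key combinatorial identity, proved by telescoping. -/
lemma shapley_key (n s : ℕ) (hs : 0 < s) (hsn : s ≤ n) :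
    ∑ k ∈ range (n - s + 1),
      ((n - s).choose k : ℝ) *
        ((k.factorial : ℝ) * ((n - k - 1).factorial : ℝ) / (n.factorial : ℝ)) =
      1 / s := by
  have hF : (n.factorial : ℝ) ≠ 0 := Nat.cast_ne_zero.mpr n.factorial_ne_zero
  have hS : (s : ℝ) ≠ 0 := Nat.cast_ne_zero.mpr hs.ne'
  set b : ℕ → ℝ := fun k =>
    (((n - s).descFactorial k : ℝ) * ((n - k).factorial : ℝ)) / ((s : ℝ) * n.factorial)
    with hb
  have hterm : ∀ k ∈ range (n - s + 1),
      ((n - s).choose k : ℝ) *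
        ((k.factorial : ℝ) * ((n - k - 1).factorial : ℝ) / (n.factorial : ℝ)) =
      b k - b (k + 1) := by
    intro k hk
    rw [mem_range] at hk
    have hk' : k ≤ n - s := by omega
    have hkn : k < n := by omega
    have e1 : (n - k).factorial = (n - k) * (n - k - 1).factorial := by
      have h : n - k = (n - k - 1) + 1 := by omega
      rw [h, Nat.factorial_succ]; simp
    have e2 : (n - s).descFactorial (k + 1) = (n - s - k) * (n - s).descFactorial k :=
      Nat.descFactorial_succ _ _
    have e4 : (n - s).descFactorial k = k.factorial * (n - s).choose k :=
      Nat.descFactorial_eq_factorial_mul_choose _ _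
    have e6 : n - (k + 1) = n - k - 1 := by omega
    have e5 : ((n - s - k : ℕ) : ℝ) = ((n - k : ℕ) : ℝ) - (s : ℝ) := by
      have : (n - s - k) + s = n - k := by omega
      push_cast [← this]; ring
    simp only [hb, e1, e2, e4, e6]
    push_cast [e5]
    field_simp
    ring
  rw [Finset.sum_congr rfl hterm, Finset.sum_range_sub' b]
  have h0 : b 0 = 1 / s := by
    simp only [hb, Nat.descFactorial_zero, Nat.cast_one, one_mul, Nat.sub_zero]
    field_simp
  have h1 : b (n - s + 1) = 0 := by
    have : (n - s).descFactorial (n - s + 1) = 0 :=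
      Nat.descFactorial_eq_zero_iff_lt.mpr (by omega)
    simp [hb, this]
  rw [h0, h1, sub_zero]

/-- The coverage value of a coalition as a sum of indicators over closed
neighbourhoods. -/
lemma cover_card {V : Type*} [Fintype V] [DecidableEq V]
    (G : SimpleGraph V) [DecidableRel G.Adj] (C : Finset V) :
    ((C ∪ (C.biUnion (fun c => G.neighborFinset c) \ C)).card : ℝ) =
    ∑ u : V, (if ((insert u (G.neighborFinset u)) ∩ C).Nonempty then (1 : ℝ) else 0) := by
  rw [Finset.sum_boole]
  congr 1
  congr 1
  ext u
  simp only [mem_union, mem_sdiff, mem_biUnion, SimpleGraph.mem_neighborFinset,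
    mem_filter, mem_univ, true_and, Finset.Nonempty, mem_inter, mem_insert]
  constructor
  · rintro (hu | ⟨⟨c, hc, hadj⟩, -⟩)
    · exact ⟨u, Or.inl rfl, hu⟩
    · exact ⟨c, Or.inr hadj.symm, hc⟩
  · rintro ⟨x, hx | hadj, hxC⟩
    · exact Or.inl (hx ▸ hxC)
    · by_cases huC : u ∈ C
      · exact Or.inl huC
      · exact Or.inr ⟨⟨x, hxC, hadj.symm⟩, huC⟩

/-- The inner sum in the Shapley value of an indicator game, in the case where
the player belongs to the relevant set. -/
lemma inner_pos {V : Type*} [Fintype V] [DecidableEq V] (v : V) (S : Finset V) (hv : v ∈ S) :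
    ∑ C ∈ (Finset.univ.erase v).powerset,
      ((C.card.factorial * (Fintype.card V - C.card - 1).factorial : ℝ) /
          ((Fintype.card V).factorial : ℝ)) *
        ((if (S ∩ insert v C).Nonempty then (1 : ℝ) else 0) -
         (if (S ∩ C).Nonempty then (1 : ℝ) else 0)) = 1 / S.card := by
  classical
  set n := Fintype.card V with hn
  have step1 : ∀ C ∈ (Finset.univ.erase v).powerset,
      ((C.card.factorial * (n - C.card - 1).factorial : ℝ) / (n.factorial : ℝ)) *
        ((if (S ∩ insert v C).Nonempty then (1 : ℝ) else 0) -
         (if (S ∩ C).Nonempty then (1 : ℝ) else 0)) =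
      if ¬(S ∩ C).Nonempty then
        ((C.card.factorial * (n - C.card - 1).factorial : ℝ) / (n.factorial : ℝ)) else 0 := by
    intro C _
    rw [if_pos ⟨v, mem_inter.mpr ⟨hv, mem_insert_self _ _⟩⟩]
    by_cases h : (S ∩ C).Nonempty <;> simp [h]
  rw [Finset.sum_congr rfl step1, ← Finset.sum_filter]
  have hfilter : (Finset.univ.erase v).powerset.filter
      (fun C => ¬(S ∩ C).Nonempty) = (Finset.univ \ S).powerset := by
    ext C
    simp only [mem_filter, mem_powerset, not_nonempty_iff_eq_empty,
      Finset.eq_empty_iff_forall_notMem, mem_inter, not_and]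
    constructor
    · rintro ⟨hsub, hdisj⟩ x hx
      exact mem_sdiff.mpr ⟨mem_univ x, fun hxS => hdisj x hxS hx⟩
    · intro h
      refine ⟨fun x hx => mem_erase.mpr ⟨fun hxv => (mem_sdiff.mp (h hx)).2 (hxv ▸ hv), mem_univ x⟩,
        fun x hxS hxC => (mem_sdiff.mp (h hxC)).2 hxS⟩
  rw [hfilter]
  have hcard : (Finset.univ \ S).card = n - S.card := by
    rw [card_sdiff_of_subset (subset_univ _), card_univ, ← hn]
  have hsle : S.card ≤ n := by rw [hn, ← card_univ]; exact card_le_card (subset_univ _)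
  have hspos : 0 < S.card := card_pos.mpr ⟨v, hv⟩
  rw [powerset_card_disjiUnion]
  refine (Finset.sum_disjiUnion _ _ _).trans ?_
  have hgrp : ∀ k ∈ range ((Finset.univ \ S).card + 1),
      (∑ C ∈ powersetCard k (Finset.univ \ S),
        ((C.card.factorial * (n - C.card - 1).factorial : ℝ) / (n.factorial : ℝ))) =
      (((Finset.univ \ S).card.choose k : ℝ)) *
        ((k.factorial : ℝ) * ((n - k - 1).factorial : ℝ) / (n.factorial : ℝ)) := by
    intro k _
    have hconst : ∀ C ∈ powersetCard k (Finset.univ \ S),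
        ((C.card.factorial * (n - C.card - 1).factorial : ℝ) / (n.factorial : ℝ)) =
        (k.factorial : ℝ) * ((n - k - 1).factorial : ℝ) / (n.factorial : ℝ) := by
      intro C hC'
      rw [(mem_powersetCard.mp hC').2]
    rw [Finset.sum_congr rfl hconst, Finset.sum_const, card_powersetCard, nsmul_eq_mul]
  rw [Finset.sum_congr rfl hgrp, hcard, shapley_key n S.card hspos hsle]

/-- For the game where the value of a coalition `C` is the number of nodes in
`C ∪ N(C)`, the Shapley value of a node `v` equals
`Σ_{u ∈ N(v) ∪ {v}} 1/(1 + deg u)`. -/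
theorem shapley_degree_game {V : Type*} [Fintype V] [DecidableEq V]
    (G : SimpleGraph V) [DecidableRel G.Adj]
    (ν : Finset V → ℝ)
    (hν : ∀ C : Finset V,
      ν C = ((C ∪ (C.biUnion (fun c => G.neighborFinset c) \ C)).card : ℝ))
    (v : V) :
    shapley ν v = ∑ u ∈ insert v (G.neighborFinset v), 1 / (1 + (G.degree u : ℝ)) := by
  classical
  have hB : shapley ν v =
      ∑ u : V, ∑ C ∈ (Finset.univ.erase v).powerset,
        ((C.card.factorial * (Fintype.card V - C.card - 1).factorial : ℝ) /
            ((Fintype.card V).factorial : ℝ)) *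
          ((if ((insert u (G.neighborFinset u)) ∩ insert v C).Nonempty then (1 : ℝ) else 0) -
           (if ((insert u (G.neighborFinset u)) ∩ C).Nonempty then (1 : ℝ) else 0)) := by
    rw [Finset.sum_comm]
    unfold shapley
    refine Finset.sum_congr rfl fun C _ => ?_
    rw [hν, hν, cover_card, cover_card, ← Finset.sum_sub_distrib, Finset.mul_sum]
  rw [hB]
  have hC : ∀ u : V,
      (∑ C ∈ (Finset.univ.erase v).powerset,
        ((C.card.factorial * (Fintype.card V - C.card - 1).factorial : ℝ) /
            ((Fintype.card V).factorial : ℝ)) *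
          ((if ((insert u (G.neighborFinset u)) ∩ insert v C).Nonempty then (1 : ℝ) else 0) -
           (if ((insert u (G.neighborFinset u)) ∩ C).Nonempty then (1 : ℝ) else 0))) =
      if u ∈ insert v (G.neighborFinset v) then 1 / (1 + (G.degree u : ℝ)) else 0 := by
    intro u
    by_cases hvu : v ∈ insert u (G.neighborFinset u)
    · have hmem : u ∈ insert v (G.neighborFinset v) := by
        simp only [mem_insert, SimpleGraph.mem_neighborFinset] at hvu ⊢
        rcases hvu with h | h
        · exact Or.inl h.symm
        · exact Or.inr h.symm
      rw [if_pos hmem, inner_pos v _ hvu]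
      have hScard : (insert u (G.neighborFinset u)).card = 1 + G.degree u := by
        rw [card_insert_of_notMem (SimpleGraph.notMem_neighborFinset_self G u),
          SimpleGraph.card_neighborFinset_eq_degree]
        omega
      rw [hScard]
      push_cast
      ring
    · have hmem : u ∉ insert v (G.neighborFinset v) := by
        simp only [mem_insert, SimpleGraph.mem_neighborFinset] at hvu ⊢
        push_neg at hvu ⊢
        exact ⟨fun h => hvu.1 h.symm, fun h => hvu.2 h.symm⟩
      rw [if_neg hmem]
      refine Finset.sum_eq_zero fun C _ => ?_
      have heq : (insert u (G.neighborFinset u)) ∩ insert v C =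
          (insert u (G.neighborFinset u)) ∩ C := by
        ext x
        simp only [mem_inter, mem_insert]
        constructor
        · rintro ⟨hxS, hx | hx⟩
          · exact absurd (mem_insert.mpr (hx ▸ hxS)) hvu
          · exact ⟨hxS, hx⟩
        · rintro ⟨hxS, hx⟩; exact ⟨hxS, Or.inr hx⟩
      rw [heq, sub_self, mul_zero]
  rw [Finset.sum_congr rfl fun u _ => hC u, Finset.sum_ite_mem, Finset.univ_inter]
end

section
/- Let G = (V, E) be a finite simple undirected graph, let k ≥ 1 be an integer, and define ν₂ : 2^V → ℝ by ν₂(C) = |{u ∈ V : u ∈ C or |N(u) ∩ C| ≥ k}| (so ν₂(∅) = 0). Then for every v ∈ V, the Shapley value of v in the game (V, ν₂) equals min(1, k/(1 + deg(v))) + Σ_{u ∈ N(v)} max(0, (deg(u) − k + 1) / (deg(u)·(1 + deg(u)))). -/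
open Finset

lemma nvdm (b : ℕ) : ∀ (N c : ℕ),
    ∑ m ∈ range (N + 1), (b + m).choose b * (c + (N - m)).choose c
      = (b + c + N + 1).choose N := by
  induction b with
  | zero =>
    intro N
    induction N with
    | zero => simp
    | succ N ih =>
      intro c
      rw [Finset.sum_range_succ']
      have h1 : ∀ m, (0 + (m + 1)).choose 0 * (c + (N + 1 - (m + 1))).choose c
          = (0 + m).choose 0 * (c + (N - m)).choose c := by
        intro m; simp [Nat.succ_sub_succ]
      rw [Finset.sum_congr rfl fun m _ => h1 m, ih c]
      simp only [Nat.zero_add, Nat.choose_zero_right, Nat.sub_zero, one_mul]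
      have h2 : c + (N + 1) + 1 = (c + N + 1) + 1 := by ring
      have h3 : (c + N + 1).choose (N + 1) = (c + N + 1).choose c := by
        rw [← Nat.choose_symm (by omega)]; congr 1; omega
      have h0 : c + (N + 1) = c + N + 1 := by ring
      rw [h0, Nat.choose_succ_succ, h3]
  | succ b ihb =>
    intro N
    induction N with
    | zero => intro c; simp
    | succ N ihN =>
      intro c
      have h1 : ∀ m, (b + 1 + m).choose (b + 1) * (c + (N + 1 - m)).choose c
          = (b + m).choose b * (c + (N + 1 - m)).choose c
            + (b + m).choose (b + 1) * (c + (N + 1 - m)).choose c := by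
        intro m
        have : b + 1 + m = (b + m) + 1 := by ring
        rw [this, Nat.choose_succ_succ, add_mul]
      rw [Finset.sum_congr rfl fun m _ => h1 m, Finset.sum_add_distrib, ihb (N + 1) c]
      have h2 : ∑ m ∈ range (N + 1 + 1), (b + m).choose (b + 1) * (c + (N + 1 - m)).choose c
          = (b + 1 + c + N + 1).choose N := by
        rw [Finset.sum_range_succ']
        have h3 : ∀ m, (b + (m + 1)).choose (b + 1) * (c + (N + 1 - (m + 1))).choose c
            = (b + 1 + m).choose (b + 1) * (c + (N - m)).choose c := by
          intro m
          congr 2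
          · omega
          · omega
        rw [Finset.sum_congr rfl fun m _ => h3 m, ihN c]
        simp [Nat.choose_succ_self]
      rw [h2]
      have h4 : b + 1 + c + (N + 1) + 1 = (b + c + N + 2) + 1 := by ring
      have h5 : b + 1 + c + N + 1 = b + c + N + 2 := by ring
      have h6 : b + c + (N + 1) + 1 = b + c + N + 2 := by ring
      have h7 : (b + c + N + 2 + 1).choose (N + 1)
          = (b + c + N + 2).choose N + (b + c + N + 2).choose (N + 1) :=
        Nat.choose_succ_succ _ _
      rw [h4, h5, h6, h7]
      omega


lemma natkey (N b c : ℕ) :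
    ∑ m ∈ range (N + 1), N.choose m * ((b + m).factorial * (c + (N - m)).factorial)
      = (b + c + N + 1).choose N * (b.factorial * (c.factorial * N.factorial)) := by
  rw [← nvdm b N c, Finset.sum_mul]
  refine Finset.sum_congr rfl fun m hm => ?_
  have hmN : m ≤ N := by simpa [Nat.lt_succ_iff] using hm
  have h1 : (b + m).choose b * b.factorial * m.factorial = (b + m).factorial := by
    have := Nat.choose_mul_factorial_mul_factorial (show b ≤ b + m by omega)
    simpa using this
  have h2 : (c + (N - m)).choose c * c.factorial * (N - m).factorial
      = (c + (N - m)).factorial := by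
    have := Nat.choose_mul_factorial_mul_factorial (show c ≤ c + (N - m) by omega)
    simpa using this
  have h3 : N.choose m * m.factorial * (N - m).factorial = N.factorial :=
    Nat.choose_mul_factorial_mul_factorial hmN
  rw [← h1, ← h2, ← h3]
  ring

lemma keynum (N b c : ℕ) :
    ∑ m ∈ range (N + 1),
        (N.choose m : ℝ) * (((b + m).factorial : ℝ) * ((c + (N - m)).factorial : ℝ))
          / ((N + (b + c) + 1).factorial : ℝ)
      = ((b.factorial : ℝ) * (c.factorial : ℝ)) / (((b + c) + 1).factorial : ℝ) := by
  rw [← Finset.sum_div]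
  have h2 : ∑ m ∈ range (N + 1),
      (N.choose m : ℝ) * (((b + m).factorial : ℝ) * ((c + (N - m)).factorial : ℝ))
        = (((b + c + N + 1).choose N : ℕ) : ℝ)
          * ((b.factorial : ℝ) * ((c.factorial : ℝ) * (N.factorial : ℝ))) := by
    exact_mod_cast congrArg (Nat.cast : ℕ → ℝ) (natkey N b c)
  rw [h2, Nat.cast_choose ℝ (show N ≤ b + c + N + 1 by omega)]
  have e1 : b + c + N + 1 - N = b + c + 1 := by omega
  have e2 : N + (b + c) + 1 = b + c + N + 1 := by omega
  rw [e1, e2]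
  have f1 : ((N.factorial : ℝ)) ≠ 0 := by positivity
  have f2 : (((b + c + 1).factorial : ℝ)) ≠ 0 := by positivity
  have f3 : (((b + c + N + 1).factorial : ℝ)) ≠ 0 := by positivity
  field_simp


lemma key {α : Type*} [Fintype α] [DecidableEq α] (i : α) (S B : Finset α)
    (hS : S ⊆ univ.erase i) (hB : B ⊆ S) :
    ∑ C ∈ (univ.erase i).powerset.filter (fun C => C ∩ S = B),
        ((C.card.factorial : ℝ) * ((Fintype.card α - C.card - 1).factorial : ℝ))
          / ((Fintype.card α).factorial : ℝ)
      = ((B.card.factorial : ℝ) * ((S.card - B.card).factorial : ℝ))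
          / ((S.card + 1).factorial : ℝ) := by
  classical
  set n := Fintype.card α with hn
  set R : Finset α := (univ.erase i) \ S with hR
  set N := R.card with hN
  set s := S.card with hs
  set b := B.card with hb
  have hbs : b ≤ s := card_le_card hB
  have hsn : s ≤ (univ.erase i).card := card_le_card hS
  have hcardE : (univ.erase i).card = n - 1 := by
    rw [card_erase_of_mem (mem_univ i), card_univ]
  have hn1 : 1 ≤ n := by
    have : i ∈ (univ : Finset α) := mem_univ i
    exact Fintype.card_pos_iff.mpr ⟨i⟩
  have hNs : N + s = n - 1 := by
    rw [hN, hR, card_sdiff_of_subset hS, hcardE]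
    omega
  have hnN : n = N + s + 1 := by omega
  -- reindex the sum over subsets of R
  have hset : (univ.erase i).powerset.filter (fun C => C ∩ S = B)
      = R.powerset.image (fun D => B ∪ D) := by
    ext C
    simp only [mem_filter, mem_powerset, mem_image]
    constructor
    · rintro ⟨hC, hCS⟩
      refine ⟨C \ S, sdiff_subset_sdiff hC (le_refl S), ?_⟩
      rw [← hCS]
      ext x
      simp only [mem_union, mem_inter, mem_sdiff]
      tauto
    · rintro ⟨D, hD, rfl⟩
      have hDS : Disjoint D S := by
        rw [hR] at hD
        exact Finset.disjoint_left.mpr fun x hx hxS =>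
          (Finset.mem_sdiff.mp (hD hx)).2 hxS
      constructor
      · exact union_subset (hB.trans hS) (hD.trans (Finset.sdiff_subset))
      · rw [Finset.union_inter_distrib_right, Finset.inter_eq_left.mpr hB,
          Finset.disjoint_iff_inter_eq_empty.mp hDS, union_empty]
  rw [hset]
  rw [Finset.sum_image (by
    intro D1 h1 D2 h2 heq
    have hd : ∀ D : Finset α, D ⊆ R → (B ∪ D) \ B = D := by
      intro D hD
      have hDB : Disjoint D B := by
        refine Finset.disjoint_left.mpr fun x hx hxB => ?_
        have := hD hx
        rw [hR, Finset.mem_sdiff] at this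
        exact this.2 (hB hxB)
      exact Finset.union_sdiff_cancel_left hDB.symm
    rw [← hd D1 (mem_powerset.mp h1), ← hd D2 (mem_powerset.mp h2), show B ∪ D1 = B ∪ D2 from heq])]
  have step1 : ∑ D ∈ R.powerset,
      (((B ∪ D).card.factorial : ℝ) * ((n - (B ∪ D).card - 1).factorial : ℝ))
        / (n.factorial : ℝ)
      = ∑ D ∈ R.powerset,
        (((b + D.card).factorial : ℝ) * ((n - (b + D.card) - 1).factorial : ℝ))
          / (n.factorial : ℝ) := by
    refine Finset.sum_congr rfl fun D hD => ?_
    have hdisj : Disjoint B D := by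
      refine Finset.disjoint_left.mpr fun x hxB hxD => ?_
      have := (mem_powerset.mp hD) hxD
      rw [hR, Finset.mem_sdiff] at this
      exact this.2 (hB hxB)
    rw [card_union_of_disjoint hdisj]
  rw [step1, Finset.sum_powerset_apply_card
    (fun m => (((b + m).factorial : ℝ) * ((n - (b + m) - 1).factorial : ℝ))
      / (n.factorial : ℝ))]
  simp only [nsmul_eq_mul, ← hN]
  have goalmid : ∑ m ∈ range (N + 1), (N.choose m : ℝ)
        * ((((b + m).factorial : ℝ) * ((n - (b + m) - 1).factorial : ℝ))
          / (n.factorial : ℝ))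
      = ∑ m ∈ range (N + 1), (N.choose m : ℝ)
        * (((b + m).factorial : ℝ) * (((s - b) + (N - m)).factorial : ℝ))
          / ((N + (b + (s - b)) + 1).factorial : ℝ) := by
    refine Finset.sum_congr rfl fun m hm => ?_
    have hm' : m ≤ N := by
      have := mem_range.mp hm; omega
    rw [show n - (b + m) - 1 = (s - b) + (N - m) by omega,
      show n = N + (b + (s - b)) + 1 by omega]
    ring
  rw [goalmid, keynum N b (s - b), show b + (s - b) = s by omega]

lemma key' {α : Type*} [Fintype α] [DecidableEq α] (i : α) (S : Finset α)
    (hS : S ⊆ univ.erase i) (f : Finset α → ℝ) :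
    ∑ C ∈ (univ.erase i).powerset,
        (((C.card.factorial : ℝ) * ((Fintype.card α - C.card - 1).factorial : ℝ))
          / ((Fintype.card α).factorial : ℝ)) * f (C ∩ S)
      = ∑ B ∈ S.powerset,
        (((B.card.factorial : ℝ) * ((S.card - B.card).factorial : ℝ))
          / ((S.card + 1).factorial : ℝ)) * f B := by
  classical
  rw [← Finset.sum_fiberwise_of_maps_to (g := fun C => C ∩ S) (t := S.powerset)
    (fun C _ => mem_powerset.mpr inter_subset_right)]
  refine Finset.sum_congr rfl fun B hB => ?_
  have hBS := mem_powerset.mp hB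
  have h1 : ∑ C ∈ (univ.erase i).powerset.filter (fun C => C ∩ S = B),
      (((C.card.factorial : ℝ) * ((Fintype.card α - C.card - 1).factorial : ℝ))
        / ((Fintype.card α).factorial : ℝ)) * f (C ∩ S)
      = (∑ C ∈ (univ.erase i).powerset.filter (fun C => C ∩ S = B),
        ((C.card.factorial : ℝ) * ((Fintype.card α - C.card - 1).factorial : ℝ))
          / ((Fintype.card α).factorial : ℝ)) * f B := by
    rw [Finset.sum_mul]
    refine Finset.sum_congr rfl fun C hC => ?_
    rw [(mem_filter.mp hC).2]
  rw [h1, key i S B hS hBS]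

lemma marginal {V : Type*} [Fintype V] [DecidableEq V]
    (G : SimpleGraph V) [DecidableRel G.Adj] (k : ℕ) (hk : 1 ≤ k)
    (ν : Finset V → ℝ)
    (hν : ∀ C : Finset V,
      ν C = ((Finset.univ.filter
        (fun u => u ∈ C ∨ k ≤ (G.neighborFinset u ∩ C).card)).card : ℝ))
    (v : V) (C : Finset V) (hvC : v ∉ C) :
    ν (insert v C) - ν C
      = (if (G.neighborFinset v ∩ C).card < k then (1 : ℝ) else 0)
        + ∑ u ∈ G.neighborFinset v,
            (if u ∉ C ∧ (G.neighborFinset u ∩ C).card = k - 1 then (1 : ℝ) else 0) := by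
  classical
  rw [hν, hν]
  rw [← Finset.sum_boole (p := fun u => u ∈ insert v C ∨ k ≤ (G.neighborFinset u ∩ insert v C).card),
      ← Finset.sum_boole (p := fun u => u ∈ C ∨ k ≤ (G.neighborFinset u ∩ C).card),
      ← Finset.sum_sub_distrib]
  have hpt : ∀ u : V,
      ((if u ∈ insert v C ∨ k ≤ (G.neighborFinset u ∩ insert v C).card then (1:ℝ) else 0)
        - (if u ∈ C ∨ k ≤ (G.neighborFinset u ∩ C).card then (1:ℝ) else 0))
      = (if u = v then (if (G.neighborFinset v ∩ C).card < k then (1:ℝ) else 0)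
          else (if u ∈ G.neighborFinset v ∧ u ∉ C
              ∧ (G.neighborFinset u ∩ C).card = k - 1 then (1:ℝ) else 0)) := by
    intro u
    by_cases huv : u = v
    · subst huv
      have h2 : u ∉ C := hvC
      rw [if_pos (Or.inl (mem_insert_self u C)), if_pos rfl]
      set c := (G.neighborFinset u ∩ C).card with hc
      by_cases hkc : k ≤ c
      · rw [if_pos (Or.inr hkc), if_neg (show ¬ c < k by omega)]
        norm_num
      · rw [if_neg (show ¬ (u ∈ C ∨ k ≤ c) by tauto),
          if_pos (show c < k by omega)]
        norm_num
    · by_cases hadj : u ∈ G.neighborFinset v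
      · have hvu : v ∈ G.neighborFinset u := by
          rw [SimpleGraph.mem_neighborFinset] at hadj ⊢
          exact hadj.symm
        have hins : G.neighborFinset u ∩ insert v C
            = insert v (G.neighborFinset u ∩ C) := Finset.inter_insert_of_mem hvu
        have hvnin : v ∉ G.neighborFinset u ∩ C := fun h => hvC (mem_inter.mp h).2
        have hcard : (G.neighborFinset u ∩ insert v C).card
            = (G.neighborFinset u ∩ C).card + 1 := by
          rw [hins, card_insert_of_notMem hvnin]
        by_cases huC : u ∈ C
        · have h3 : u ∈ insert v C := mem_insert_of_mem huC
          simp [h3, huC, huv]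
        · rw [hcard]
          have h5 : u ∉ insert v C := by simp [mem_insert, huv, huC]
          set c := (G.neighborFinset u ∩ C).card with hc
          by_cases hck : c = k - 1
          · rw [if_pos (show u ∈ insert v C ∨ k ≤ c + 1 from Or.inr (by omega)),
              if_neg (show ¬ (u ∈ C ∨ k ≤ c) by
                push_neg
                exact ⟨huC, by omega⟩),
              if_neg huv, if_pos (show u ∈ G.neighborFinset v ∧ u ∉ C ∧ c = k - 1
                from ⟨hadj, huC, hck⟩)]
            norm_num
          · rw [if_neg huv,
              if_neg (show ¬ (u ∈ G.neighborFinset v ∧ u ∉ C ∧ c = k - 1)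
                from fun h => hck h.2.2)]
            by_cases hkc : k ≤ c
            · rw [if_pos (show u ∈ insert v C ∨ k ≤ c + 1 from Or.inr (by omega)),
                if_pos (show u ∈ C ∨ k ≤ c from Or.inr hkc)]
              norm_num
            · rw [if_neg (show ¬ (u ∈ insert v C ∨ k ≤ c + 1) by
                  push_neg
                  exact ⟨h5, by omega⟩),
                if_neg (show ¬ (u ∈ C ∨ k ≤ c) by
                  push_neg
                  exact ⟨huC, by omega⟩)]
              norm_num
      · have hvu : v ∉ G.neighborFinset u := by
          rw [SimpleGraph.mem_neighborFinset] at hadj ⊢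
          exact fun h => hadj h.symm
        have hins : G.neighborFinset u ∩ insert v C
            = G.neighborFinset u ∩ C := Finset.inter_insert_of_notMem hvu
        rw [hins, if_neg huv,
          if_neg (show ¬ (u ∈ G.neighborFinset v ∧ u ∉ C
              ∧ (G.neighborFinset u ∩ C).card = k - 1) from fun h => hadj h.1)]
        by_cases h6 : u ∈ C
        · rw [if_pos (show u ∈ insert v C ∨ k ≤ (G.neighborFinset u ∩ C).card
              from Or.inl (mem_insert_of_mem h6)),
            if_pos (show u ∈ C ∨ k ≤ (G.neighborFinset u ∩ C).card from Or.inl h6)]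
          norm_num
        · have h5 : u ∉ insert v C := by simp [mem_insert, huv, h6]
          by_cases hkc : k ≤ (G.neighborFinset u ∩ C).card
          · rw [if_pos (show u ∈ insert v C ∨ k ≤ (G.neighborFinset u ∩ C).card
                from Or.inr hkc),
              if_pos (show u ∈ C ∨ k ≤ (G.neighborFinset u ∩ C).card from Or.inr hkc)]
            norm_num
          · rw [if_neg (show ¬ (u ∈ insert v C ∨ k ≤ (G.neighborFinset u ∩ C).card) by
                push_neg
                exact ⟨h5, by omega⟩),
              if_neg (show ¬ (u ∈ C ∨ k ≤ (G.neighborFinset u ∩ C).card) by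
                push_neg
                exact ⟨h6, by omega⟩)]
            norm_num
  rw [Finset.sum_congr rfl fun u _ => hpt u,
    ← Finset.add_sum_erase _ _ (mem_univ v), if_pos rfl]
  congr 1
  have hsub : G.neighborFinset v ⊆ univ.erase v := fun u hu =>
    mem_erase.mpr ⟨((G.mem_neighborFinset v u).mp hu).ne', mem_univ u⟩
  have e1 : ∀ u ∈ univ.erase v,
      (if u = v then (if (G.neighborFinset v ∩ C).card < k then (1:ℝ) else 0)
        else (if u ∈ G.neighborFinset v ∧ u ∉ C
            ∧ (G.neighborFinset u ∩ C).card = k - 1 then (1:ℝ) else 0))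
      = (if u ∈ G.neighborFinset v ∧ u ∉ C
            ∧ (G.neighborFinset u ∩ C).card = k - 1 then (1:ℝ) else 0) :=
    fun u hu => if_neg (mem_erase.mp hu).1
  rw [Finset.sum_congr rfl e1,
    ← Finset.sum_subset hsub (fun u _ hnu => if_neg (fun h => hnu h.1))]
  refine Finset.sum_congr rfl fun u hu => ?_
  simp only [hu, true_and]

lemma sum1 {α : Type*} [DecidableEq α] (S : Finset α) (k : ℕ) :
    ∑ B ∈ S.powerset,
        (((B.card.factorial : ℝ) * ((S.card - B.card).factorial : ℝ))
          / ((S.card + 1).factorial : ℝ)) * (if B.card < k then (1:ℝ) else 0)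
      = min 1 ((k : ℝ) / (1 + (S.card : ℝ))) := by
  classical
  set d := S.card with hd
  rw [Finset.sum_powerset_apply_card
    (fun m => (((m.factorial : ℝ) * ((d - m).factorial : ℝ))
      / ((d + 1).factorial : ℝ)) * (if m < k then (1:ℝ) else 0))]
  simp only [nsmul_eq_mul, ← hd]
  have step : ∀ m ∈ range (d + 1),
      (d.choose m : ℝ) * ((((m.factorial : ℝ) * ((d - m).factorial : ℝ))
        / ((d + 1).factorial : ℝ)) * (if m < k then (1:ℝ) else 0))
      = (if m < k then (1:ℝ) / (d + 1) else 0) := by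
    intro m hm
    have hm' : m ≤ d := by have := mem_range.mp hm; omega
    have h1 : (d.choose m : ℝ) * ((m.factorial : ℝ) * ((d - m).factorial : ℝ))
        = (d.factorial : ℝ) := by
      rw [← mul_assoc]
      exact_mod_cast congrArg (Nat.cast : ℕ → ℝ)
        (Nat.choose_mul_factorial_mul_factorial hm')
    have h2 : ((d + 1).factorial : ℝ) = (d + 1) * (d.factorial : ℝ) := by
      rw [Nat.factorial_succ]; push_cast; ring
    have h3 : ((d.factorial : ℝ)) ≠ 0 := by positivity
    split_ifs with h
    · rw [
        show (d.choose m : ℝ) * (((m.factorial : ℝ) * ((d - m).factorial : ℝ))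
            / ((d + 1).factorial : ℝ) * 1)
          = ((d.choose m : ℝ) * ((m.factorial : ℝ) * ((d - m).factorial : ℝ)))
            / ((d + 1).factorial : ℝ) by ring,
        h1, h2]
      field_simp
    · simp
  rw [Finset.sum_congr rfl step, ← Finset.sum_filter,
    show (range (d + 1)).filter (fun m => m < k) = range (min k (d + 1)) by
      ext m; simp only [mem_filter, mem_range, lt_min_iff]; omega,
    Finset.sum_const, card_range, nsmul_eq_mul]
  have hd1 : (0:ℝ) < (d:ℝ) + 1 := by positivity
  rcases le_total k (d + 1) with h | h
  · rw [Nat.min_eq_left h, min_eq_right (by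
      rw [div_le_one (by positivity)]
      exact_mod_cast by omega)]
    push_cast
    ring
  · rw [Nat.min_eq_right h, min_eq_left (by
      rw [le_div_iff₀ (by positivity), one_mul]
      exact_mod_cast by omega)]
    push_cast
    field_simp

lemma sum2val (e k : ℕ) (he : 1 ≤ e) (hk : 1 ≤ k) :
    ((e - 1).choose (k - 1) : ℝ)
        * ((((k - 1).factorial : ℝ) * ((e - (k - 1)).factorial : ℝ))
          / ((e + 1).factorial : ℝ))
      = max 0 (((e : ℝ) - (k : ℝ) + 1) / ((e : ℝ) * (1 + (e : ℝ)))) := by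
  rcases le_or_gt k e with hke | hek
  · -- k ≤ e
    obtain ⟨k', rfl⟩ : ∃ k', k = k' + 1 := ⟨k - 1, by omega⟩
    obtain ⟨a, rfl⟩ : ∃ a, e = k' + 1 + a := ⟨e - (k' + 1), by omega⟩
    have e1 : k' + 1 + a - 1 = k' + a := by omega
    have e2 : k' + 1 - 1 = k' := by omega
    rw [e1, e2, show k' + 1 + a - k' = a + 1 by omega,
      Nat.cast_choose ℝ (show k' ≤ k' + a by omega),
      show k' + a - k' = a by omega,
      show ((k' + 1 + a : ℕ) : ℝ) - ((k' + 1 : ℕ) : ℝ) + 1 = (a : ℝ) + 1 by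
        push_cast; ring,
      max_eq_right (by positivity : (0:ℝ) ≤ ((a:ℝ) + 1)
        / (((k' + 1 + a : ℕ) : ℝ) * (1 + ((k' + 1 + a : ℕ) : ℝ))))]
    · push_cast
      have f1 : ((k' + a).factorial : ℝ) ≠ 0 := by positivity
      have f2 : ((k'.factorial : ℝ)) ≠ 0 := by positivity
      have f3 : ((a.factorial : ℝ)) ≠ 0 := by positivity
      have f4 : ((k' + 1 + a + 1).factorial : ℝ)
          = ((k' + 1 + a + 1 : ℕ) : ℝ) * ((k' + a + 1 : ℕ) : ℝ)
            * ((k' + a).factorial : ℝ) := by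
        rw [show k' + 1 + a + 1 = (k' + a + 1) + 1 by omega, Nat.factorial_succ,
          show k' + a + 1 = (k' + a) + 1 by omega, Nat.factorial_succ]
        push_cast
        ring
      have f5 : ((a + 1).factorial : ℝ) = ((a:ℝ) + 1) * (a.factorial : ℝ) := by
        rw [Nat.factorial_succ]; push_cast; ring
      rw [f4, f5]
      have g1 : (0:ℝ) < (k':ℝ) + a + 1 := by positivity
      have g2 : (0:ℝ) < (k':ℝ) + 1 + a + 1 := by positivity
      field_simp
      push_cast
      ring
  · -- e < k : both sides zero
    have h1 : (e - 1) < (k - 1) := by omega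
    rw [Nat.choose_eq_zero_of_lt h1]
    rw [max_eq_left (by
      apply div_nonpos_of_nonpos_of_nonneg
      · have : (e:ℝ) + 1 ≤ (k:ℝ) := by exact_mod_cast by omega
        linarith
      · positivity)]
    simp

/-- For the game where the value of coalition `C` is the number of nodes that are in
`C` or have at least `k` neighbours in `C`, the Shapley value of `v` equals
`min(1, k/(1+deg v)) + Σ_{u ∈ N(v)} max(0, (deg u − k + 1)/(deg u·(1+deg u)))`. -/
theorem shapley_k_influence_game {V : Type*} [Fintype V] [DecidableEq V]
    (G : SimpleGraph V) [DecidableRel G.Adj] (k : ℕ) (hk : 1 ≤ k)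
    (ν : Finset V → ℝ)
    (hν : ∀ C : Finset V,
      ν C = ((Finset.univ.filter
        (fun u => u ∈ C ∨ k ≤ (G.neighborFinset u ∩ C).card)).card : ℝ))
    (v : V) :
    shapley ν v
      = min 1 ((k : ℝ) / (1 + (G.degree v : ℝ)))
        + ∑ u ∈ G.neighborFinset v,
            max 0 (((G.degree u : ℝ) - (k : ℝ) + 1)
              / ((G.degree u : ℝ) * (1 + (G.degree u : ℝ)))) := by
  classical
  have hvSv : G.neighborFinset v ⊆ univ.erase v := fun u hu =>
    mem_erase.mpr ⟨((G.mem_neighborFinset v u).mp hu).ne', mem_univ u⟩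
  have hmarg : ∀ C ∈ (Finset.univ.erase v).powerset,
      ((C.card.factorial * (Fintype.card V - C.card - 1).factorial : ℝ) /
          ((Fintype.card V).factorial : ℝ)) * (ν (insert v C) - ν C)
      = ((C.card.factorial * (Fintype.card V - C.card - 1).factorial : ℝ) /
          ((Fintype.card V).factorial : ℝ))
        * ((if (C ∩ G.neighborFinset v).card < k then (1:ℝ) else 0)
          + ∑ u ∈ G.neighborFinset v,
              (if u ∉ (C ∩ (insert u ((G.neighborFinset u).erase v)))
                  ∧ ((G.neighborFinset u)
                      ∩ (C ∩ (insert u ((G.neighborFinset u).erase v)))).card = k - 1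
                then (1:ℝ) else 0)) := by
    intro C hC
    have hCsub := mem_powerset.mp hC
    have hvC : v ∉ C := fun h => (mem_erase.mp (hCsub h)).1 rfl
    rw [marginal G k hk ν hν v C hvC]
    congr 1
    congr 1
    · rw [inter_comm]
    · refine Finset.sum_congr rfl fun u hu => ?_
      have hvNu : v ∈ G.neighborFinset u :=
        (G.mem_neighborFinset u v).mpr ((G.mem_neighborFinset v u).mp hu).symm
      have hrw : G.neighborFinset u ∩ C
          = G.neighborFinset u ∩ (C ∩ insert u ((G.neighborFinset u).erase v)) := by
        ext x
        simp only [mem_inter, mem_insert, mem_erase]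
        constructor
        · rintro ⟨hxN, hxC⟩
          have hxv : x ≠ v := fun h => hvC (h ▸ hxC)
          exact ⟨hxN, hxC, Or.inr ⟨hxv, hxN⟩⟩
        · tauto
      have hmem : (u ∈ C) ↔ u ∈ C ∩ insert u ((G.neighborFinset u).erase v) := by
        simp [mem_inter]
      refine if_congr (and_congr ?_ ?_) rfl rfl
      · exact not_congr hmem
      · rw [← hrw]
  rw [shapley, Finset.sum_congr rfl hmarg]
  simp only [mul_add, Finset.mul_sum]
  rw [Finset.sum_add_distrib, Finset.sum_comm]
  congr 1
  · rw [key' v (G.neighborFinset v) hvSv (fun B => if B.card < k then (1:ℝ) else 0),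
      sum1, SimpleGraph.card_neighborFinset_eq_degree]
  · refine Finset.sum_congr rfl fun u hu => ?_
    have hadj : G.Adj v u := (G.mem_neighborFinset v u).mp hu
    have hvNu : v ∈ G.neighborFinset u := (G.mem_neighborFinset u v).mpr hadj.symm
    have huNu : u ∉ G.neighborFinset u := SimpleGraph.notMem_neighborFinset_self G u
    have hSu : insert u ((G.neighborFinset u).erase v) ⊆ univ.erase v := by
      intro x hx
      rcases mem_insert.mp hx with rfl | hx'
      · exact mem_erase.mpr ⟨hadj.ne', mem_univ _⟩
      · exact mem_erase.mpr ⟨(mem_erase.mp hx').1, mem_univ _⟩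
    rw [key' v _ hSu (fun B => if u ∉ B
        ∧ ((G.neighborFinset u) ∩ B).card = k - 1 then (1:ℝ) else 0)]
    have hdeg1 : 1 ≤ G.degree u := by
      rw [← SimpleGraph.card_neighborFinset_eq_degree]
      exact card_pos.mpr ⟨v, hvNu⟩
    have hScard : (insert u ((G.neighborFinset u).erase v)).card = G.degree u := by
      rw [card_insert_of_notMem (fun h => huNu (mem_erase.mp h).2),
        card_erase_of_mem hvNu, SimpleGraph.card_neighborFinset_eq_degree]
      omega
    rw [hScard]
    simp only [mul_ite, mul_one, mul_zero]
    rw [← Finset.sum_filter]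
    have hfilter : (insert u ((G.neighborFinset u).erase v)).powerset.filter
          (fun B => u ∉ B ∧ ((G.neighborFinset u) ∩ B).card = k - 1)
        = ((G.neighborFinset u).erase v).powersetCard (k - 1) := by
      ext B
      simp only [mem_filter, mem_powerset, mem_powersetCard]
      constructor
      · rintro ⟨hBSu, huB, hcard⟩
        have hBe : B ⊆ (G.neighborFinset u).erase v := by
          intro x hx
          rcases mem_insert.mp (hBSu hx) with rfl | hx'
          · exact absurd hx huB
          · exact hx'
        have : G.neighborFinset u ∩ B = B :=
          Finset.inter_eq_right.mpr (hBe.trans (erase_subset _ _))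
        rw [this] at hcard
        exact ⟨hBe, hcard⟩
      · rintro ⟨hBe, hcard⟩
        have huB : u ∉ B := fun h => huNu ((mem_erase.mp (hBe h)).2)
        have : G.neighborFinset u ∩ B = B :=
          Finset.inter_eq_right.mpr (hBe.trans (erase_subset _ _))
        exact ⟨hBe.trans (subset_insert _ _), huB, by rw [this]; exact hcard⟩
    rw [hfilter,
      Finset.sum_congr rfl (fun B hB => by rw [(mem_powersetCard.mp hB).2]),
      Finset.sum_const, card_powersetCard, card_erase_of_mem hvNu,
      SimpleGraph.card_neighborFinset_eq_degree, nsmul_eq_mul]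
    rw [sum2val (G.degree u) k hdeg1 hk]
    congr 2
    ring
end

section
/- Let G = (V, E) be a finite simple undirected graph and let k : V → ℕ satisfy 1 ≤ k(u) ≤ 1 + deg(u) for every u ∈ V. Define ν : 2^V → ℝ by ν(C) = |{u ∈ V : u ∈ C or |N(u) ∩ C| ≥ k(u)}| (so ν(∅) = 0 since every k(u) ≥ 1). Then for every v ∈ V, the Shapley value of v in the game (V, ν) equals k(v)/(1 + deg(v)) + Σ_{u ∈ N(v)} (1 + deg(u) − k(u)) / (deg(u)·(1 + deg(u))). -/
open Finset

lemma choose_conv (b c r : ℕ) :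
    ∑ m ∈ range (r+1), (b+m).choose m * (c+(r-m)).choose (r-m)
      = (b+c+r+1).choose r := by
  induction b generalizing r with
  | zero =>
    have h0 : ∑ m ∈ range (r+1), (0+m).choose m * (c+(r-m)).choose (r-m)
        = ∑ m ∈ range (r+1), (c+(r-m)).choose (r-m) := by
      refine Finset.sum_congr rfl fun m _ => ?_; simp
    have h1 : ∑ m ∈ range (r+1), (c+(r-m)).choose (r-m)
        = ∑ m ∈ range (r+1), (c+m).choose m := by
      have := Finset.sum_range_reflect (fun m => (c+m).choose m) (r+1)
      simpa using this
    have h2 : ∑ m ∈ range (r+1), (c+m).choose m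
        = ∑ m ∈ range (r+1), (c+m).choose c := by
      refine Finset.sum_congr rfl fun m _ => ?_
      rw [Nat.add_comm, Nat.choose_symm_add]
    have h3 : ∑ m ∈ range (r+1), (c+m).choose c
        = ∑ j ∈ Icc c (c+r), j.choose c := by
      rw [show Icc c (c+r) = Ico c (c+r+1) by rw [Finset.Ico_add_one_right_eq_Icc],
        Finset.sum_Ico_eq_sum_range]
      rw [show c+r+1-c = r+1 by omega]
    rw [h0, h1, h2, h3, Nat.sum_Icc_choose]
    have h4 : (c+1) ≤ c+r+1 := by omega
    have := Nat.choose_symm h4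
    simp only [show c+r+1-(c+1) = r by omega] at this
    rw [← this]
    congr 1
    omega
  | succ b ih =>
    induction r with
    | zero => simp
    | succ r ihr =>
      rw [Finset.sum_range_succ']
      have hterm : ∀ m ∈ range (r+1),
          (b+1+(m+1)).choose (m+1) * (c+(r+1-(m+1))).choose (r+1-(m+1))
          = (b+(m+1)).choose (m+1) * (c+(r-m)).choose (r-m)
            + (b+1+m).choose m * (c+(r-m)).choose (r-m) := by
        intro m _
        have : (b+1+(m+1)).choose (m+1) = (b+(m+1)).choose (m+1) + (b+1+m).choose m := by
          have h := Nat.choose_succ_succ (b+m+1) m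
          simp only [Nat.succ_eq_add_one] at h
          rw [show b+1+(m+1) = b+m+1+1 by omega, show b+1+m = b+m+1 by omega,
            show b+(m+1) = b+m+1 by omega, h]
          omega
        rw [this, Nat.succ_sub_succ, add_mul]
      rw [Finset.sum_congr rfl hterm, Finset.sum_add_distrib]
      have hA : (∑ m ∈ range (r+1), (b+(m+1)).choose (m+1) * (c+(r-m)).choose (r-m))
          + (b+1+0).choose 0 * (c+(r+1-0)).choose (r+1-0)
          = ∑ m ∈ range (r+2), (b+m).choose m * (c+(r+1-m)).choose (r+1-m) := by
        conv_rhs => rw [Finset.sum_range_succ']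
        congr 1
        · refine Finset.sum_congr rfl fun m _ => ?_
          rw [Nat.succ_sub_succ]
        · simp
      have hB := ihr
      calc (∑ m ∈ range (r+1), (b+(m+1)).choose (m+1) * (c+(r-m)).choose (r-m))
            + (∑ m ∈ range (r+1), (b+1+m).choose m * (c+(r-m)).choose (r-m))
            + (b+1+0).choose 0 * (c+(r+1-0)).choose (r+1-0)
          = (∑ m ∈ range (r+2), (b+m).choose m * (c+(r+1-m)).choose (r+1-m))
            + (∑ m ∈ range (r+1), (b+1+m).choose m * (c+(r-m)).choose (r-m)) := by
            rw [← hA]; ring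
        _ = (b+c+(r+1)+1).choose (r+1) + (b+1+c+r+1).choose r := by rw [ih, hB]
        _ = (b+1+c+(r+1)+1).choose (r+1) := by
            have h := Nat.choose_succ_succ (b+c+r+2) r
            simp only [Nat.succ_eq_add_one, show b+1+c+(r+1)+1 = b+c+r+2+1 by omega,
              show b+c+(r+1)+1 = b+c+r+2 by omega,
              show b+1+c+r+1 = b+c+r+2 by omega] at *
            omega

lemma fact_conv (b c r : ℕ) :
    (∑ m ∈ range (r+1), r.choose m * ((b+m).factorial * (c+(r-m)).factorial))
        * (b+c+1).factorial
      = (b.factorial * c.factorial) * (b+c+r+1).factorial := by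
  have hterm : ∀ m ∈ range (r+1),
      r.choose m * ((b+m).factorial * (c+(r-m)).factorial)
      = (r.factorial * (b.factorial * c.factorial))
          * ((b+m).choose m * (c+(r-m)).choose (r-m)) := by
    intro m hm
    have hm' : m ≤ r := by simpa [Nat.lt_succ_iff] using hm
    have h1 : (b+m).choose m * m.factorial * b.factorial = (b+m).factorial := by
      have := Nat.choose_mul_factorial_mul_factorial (show m ≤ b+m by omega)
      simpa using this
    have h2 : (c+(r-m)).choose (r-m) * (r-m).factorial * c.factorial
        = (c+(r-m)).factorial := by
      have := Nat.choose_mul_factorial_mul_factorial (show r-m ≤ c+(r-m) by omega)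
      simpa using this
    have h3 : r.choose m * m.factorial * (r-m).factorial = r.factorial :=
      Nat.choose_mul_factorial_mul_factorial hm'
    rw [← h1, ← h2, ← h3]
    ring
  rw [Finset.sum_congr rfl hterm, ← Finset.mul_sum, choose_conv]
  have h4 : (b+c+r+1).choose r * r.factorial * (b+c+1).factorial
      = (b+c+r+1).factorial := by
    have := Nat.choose_mul_factorial_mul_factorial (show r ≤ b+c+r+1 by omega)
    simpa [show b+c+r+1-r = b+c+1 by omega] using this
  rw [← h4]
  ring

lemma fact_conv_real (b c r : ℕ) :
    ∑ m ∈ range (r+1),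
      (r.choose m : ℝ) * (((b+m).factorial * (c+(r-m)).factorial : ℕ) : ℝ)
        / ((b+c+r+1).factorial : ℝ)
    = ((b.factorial * c.factorial : ℕ) : ℝ) / (((b+c+1).factorial : ℕ) : ℝ) := by
  have key := fact_conv b c r
  have h1 : ((b+c+r+1).factorial : ℝ) ≠ 0 := by positivity
  have h2 : (((b+c+1).factorial : ℕ) : ℝ) ≠ 0 := by positivity
  rw [← Finset.sum_div, div_eq_div_iff h1 h2]
  exact_mod_cast key

lemma partition_sum {V : Type*} [Fintype V] [DecidableEq V] (v : V) (A B : Finset V)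
    (hA : v ∉ A) (hB : B ⊆ A) :
    ∑ C ∈ (Finset.univ.erase v).powerset,
      (if C ∩ A = B then
        ((C.card.factorial * (Fintype.card V - C.card - 1).factorial : ℕ) : ℝ)
          / ((Fintype.card V).factorial : ℝ) else 0)
    = ((B.card.factorial * (A.card - B.card).factorial : ℕ) : ℝ)
        / (((A.card + 1).factorial : ℕ) : ℝ) := by
  classical
  set n := Fintype.card V with hn
  have hAsub : A ⊆ Finset.univ.erase v := fun x hx => by
    simp [Finset.mem_erase]
    rintro rfl; exact hA hx
  set R : Finset V := (Finset.univ.erase v) \ A with hR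
  have hRA : Disjoint R A := Finset.sdiff_disjoint
  have hcardE : (Finset.univ.erase v).card = n - 1 := by
    rw [Finset.card_erase_of_mem (Finset.mem_univ v), Finset.card_univ]
  have hn1 : 1 ≤ n := Fintype.card_pos_iff.2 ⟨v⟩
  have hcardR : R.card = n - 1 - A.card := by
    rw [hR, Finset.card_sdiff_of_subset hAsub, hcardE]
  set a := A.card with ha
  set b := B.card with hb
  set r := R.card with hr
  have hba : b ≤ a := Finset.card_le_card hB
  have han : a ≤ n - 1 := hcardE ▸ Finset.card_le_card hAsub
  have hnar : n = a + r + 1 := by omega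
  -- reindex the sum over C with C ∩ A = B by D = C \ A over powerset of R
  have step1 :
      ∑ C ∈ (Finset.univ.erase v).powerset,
        (if C ∩ A = B then
          ((C.card.factorial * (n - C.card - 1).factorial : ℕ) : ℝ)
            / ((n).factorial : ℝ) else 0)
      = ∑ D ∈ R.powerset,
          (((b + D.card).factorial * (n - (b + D.card) - 1).factorial : ℕ) : ℝ)
            / ((n).factorial : ℝ) := by
    rw [← Finset.sum_filter]
    refine Finset.sum_nbij' (fun C => C \ A) (fun D => B ∪ D) ?_ ?_ ?_ ?_ ?_
    · intro C hC
      simp only [Finset.mem_filter, Finset.mem_powerset] at hC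
      simp only [Finset.mem_powerset, hR]
      exact Finset.sdiff_subset_sdiff hC.1 (le_refl _)
    · intro D hD
      simp only [Finset.mem_powerset] at hD
      simp only [Finset.mem_filter, Finset.mem_powerset]
      constructor
      · exact Finset.union_subset (hB.trans hAsub) (hD.trans Finset.sdiff_subset)
      · have h1 : D ∩ A = ∅ := Finset.disjoint_iff_inter_eq_empty.1
          (Finset.disjoint_of_subset_left hD hRA)
        rw [Finset.union_inter_distrib_right, h1, Finset.union_empty,
          Finset.inter_eq_left.2 hB]
    · intro C hC
      simp only [Finset.mem_filter, Finset.mem_powerset] at hC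
      show B ∪ C \ A = C
      rw [← hC.2]
      exact sup_inf_sdiff C A
    · intro D hD
      simp only [Finset.mem_powerset] at hD
      have h1 : B \ A = ∅ := Finset.sdiff_eq_empty_iff_subset.2 hB
      have h2 : Disjoint D A := Finset.disjoint_of_subset_left hD hRA
      show (B ∪ D) \ A = D
      rw [Finset.union_sdiff_distrib, h1, Finset.empty_union,
        Finset.sdiff_eq_self_of_disjoint h2]
    · intro C hC
      simp only [Finset.mem_filter, Finset.mem_powerset] at hC
      have hcard : C.card = b + (C \ A).card := by
        have h := Finset.card_inter_add_card_sdiff C A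
        rw [hC.2] at h
        omega
      rw [hcard]
  rw [step1, Finset.sum_powerset_apply_card
    (fun m => (((b+m).factorial * (n-(b+m)-1).factorial : ℕ) : ℝ)
      / ((n).factorial : ℝ)) (x := R)]
  have hterm2 : ∀ m ∈ range (r+1),
      (r.choose m) • ((((b+m).factorial * (n-(b+m)-1).factorial : ℕ) : ℝ)
          / ((n).factorial : ℝ))
      = (r.choose m : ℝ) * (((b+m).factorial * ((a-b)+(r-m)).factorial : ℕ) : ℝ)
          / ((b+(a-b)+r+1).factorial : ℝ) := by
    intro m hm
    have hm' : m ≤ r := by simpa [Nat.lt_succ_iff] using hm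
    rw [show n-(b+m)-1 = (a-b)+(r-m) by omega, show n = b+(a-b)+r+1 by omega,
      nsmul_eq_mul, mul_div_assoc]
  rw [Finset.sum_congr rfl hterm2, fact_conv_real, show b+(a-b)+1 = a+1 by omega]

lemma sum_indicator_inter {V : Type*} [Fintype V] [DecidableEq V] (v : V) (A : Finset V)
    (hA : v ∉ A) (p : Finset V → Prop) [DecidablePred p] :
    ∑ C ∈ (Finset.univ.erase v).powerset,
      (if p (C ∩ A) then
        ((C.card.factorial : ℝ) * ((Fintype.card V - C.card - 1).factorial : ℝ))
          / ((Fintype.card V).factorial : ℝ) else 0)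
    = ∑ B ∈ A.powerset,
        (if p B then
          ((B.card.factorial : ℝ) * ((A.card - B.card).factorial : ℝ))
            / (((A.card + 1).factorial : ℝ)) else 0) := by
  classical
  have step1 : ∀ C ∈ (Finset.univ.erase v).powerset,
      (if p (C ∩ A) then
        ((C.card.factorial : ℝ) * ((Fintype.card V - C.card - 1).factorial : ℝ))
          / ((Fintype.card V).factorial : ℝ) else 0)
      = ∑ B ∈ A.powerset, (if C ∩ A = B then
          (if p B then
            ((C.card.factorial : ℝ) * ((Fintype.card V - C.card - 1).factorial : ℝ))
              / ((Fintype.card V).factorial : ℝ) else 0) else 0) := by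
    intro C _
    rw [Finset.sum_ite_eq]
    simp [Finset.inter_subset_right]
  rw [Finset.sum_congr rfl step1, Finset.sum_comm]
  refine Finset.sum_congr rfl fun B hB => ?_
  by_cases hp : p B
  · simp only [if_pos hp]
    have := partition_sum v A B hA (Finset.mem_powerset.1 hB)
    push_cast at this ⊢
    rw [← this]
  · simp [hp]


/-- For node-dependent thresholds `k : V → ℕ` with `1 ≤ k u ≤ 1 + deg u`, the Shapley
value of `v` in the game where `ν(C)` counts nodes in `C` or with at least `k(u)`
neighbours in `C` equals
`k(v)/(1+deg v) + Σ_{u ∈ N(v)} (1 + deg u − k(u))/(deg u·(1+deg u))`. -/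
theorem shapley_k_influence_game_varying {V : Type*} [Fintype V] [DecidableEq V]
    (G : SimpleGraph V) [DecidableRel G.Adj] (k : V → ℕ)
    (hk : ∀ u : V, 1 ≤ k u ∧ k u ≤ 1 + G.degree u)
    (ν : Finset V → ℝ)
    (hν : ∀ C : Finset V,
      ν C = ((Finset.univ.filter
        (fun u => u ∈ C ∨ k u ≤ (G.neighborFinset u ∩ C).card)).card : ℝ))
    (v : V) :
    shapley ν v
      = (k v : ℝ) / (1 + (G.degree v : ℝ))
        + ∑ u ∈ G.neighborFinset v,
            (1 + (G.degree u : ℝ) - (k u : ℝ))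
              / ((G.degree u : ℝ) * (1 + (G.degree u : ℝ))) := by
  classical
  set W : ℕ → ℝ := fun c => ((c.factorial : ℝ) * ((Fintype.card V - c - 1).factorial : ℝ))
      / ((Fintype.card V).factorial : ℝ) with hW
  set g : V → Finset V → ℝ := fun u C =>
    if (u ∈ C ∨ k u ≤ (G.neighborFinset u ∩ C).card) then 1 else 0 with hg
  have hnu : ∀ C, ν C = ∑ u : V, g u C := by
    intro C
    rw [hν C, Finset.card_filter]
    push_cast
    rfl
  have hsh : shapley ν v
      = ∑ u : V, ∑ C ∈ (Finset.univ.erase v).powerset,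
          W C.card * (g u (insert v C) - g u C) := by
    rw [shapley, ← Finset.sum_comm]
    refine Finset.sum_congr rfl fun C hC => ?_
    rw [hnu, hnu, ← Finset.sum_sub_distrib, Finset.mul_sum]
  -- three cases
  have hzero : ∀ u : V, u ≠ v → u ∉ G.neighborFinset v →
      ∑ C ∈ (Finset.univ.erase v).powerset, W C.card * (g u (insert v C) - g u C) = 0 := by
    intro u huv hun
    refine Finset.sum_eq_zero fun C hC => ?_
    have h1 : (u ∈ insert v C) = (u ∈ C) := by simp [Finset.mem_insert, huv]
    have hv : v ∉ G.neighborFinset u := by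
      intro h
      exact hun (by rwa [SimpleGraph.mem_neighborFinset, SimpleGraph.adj_comm,
        ← SimpleGraph.mem_neighborFinset] at h)
    have h2 : G.neighborFinset u ∩ insert v C = G.neighborFinset u ∩ C :=
      Finset.inter_insert_of_notMem hv
    simp [hg, h1, h2]
  have hcv : ∑ C ∈ (Finset.univ.erase v).powerset, W C.card * (g v (insert v C) - g v C)
      = (k v : ℝ) / (1 + (G.degree v : ℝ)) := by
    have hkv1 := (hk v).1
    have hkv2 := (hk v).2
    set A := G.neighborFinset v with hA
    have hvA : v ∉ A := by simp [hA]
    have hdA : A.card = G.degree v := G.card_neighborFinset_eq_degree v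
    set d := G.degree v with hd
    have hpt : ∀ C ∈ (Finset.univ.erase v).powerset,
        W C.card * (g v (insert v C) - g v C)
        = if (C ∩ A).card < k v then W C.card else 0 := by
      intro C hC
      have hvC : v ∉ C := fun h => Finset.notMem_erase v Finset.univ
        (Finset.mem_powerset.1 hC h)
      have hgi : g v (insert v C) = 1 := by
        simp [hg]
      have hgC : g v C = if k v ≤ (C ∩ A).card then 1 else 0 := by
        rw [hg]
        simp only [hvC, false_or, ← hA, Finset.inter_comm A C]
      rw [hgi, hgC]
      by_cases hle : k v ≤ (C ∩ A).card
      · rw [if_pos hle, if_neg (by omega)]; ring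
      · rw [if_neg hle, if_pos (by omega)]; ring
    rw [Finset.sum_congr rfl hpt]
    simp only [hW]
    rw [sum_indicator_inter v A hvA (fun B => B.card < k v)]
    rw [Finset.sum_powerset_apply_card
      (fun j => if j < k v then ((j.factorial : ℝ) * (((A.card - j).factorial : ℝ)))
        / (((A.card + 1).factorial : ℝ)) else 0) (x := A)]
    rw [hdA]
    have hterm : ∀ j ∈ range (d+1),
        (d.choose j) • (if j < k v then ((j.factorial : ℝ) * (((d - j).factorial : ℝ)))
          / (((d + 1).factorial : ℝ)) else 0)
        = if j < k v then ((d.factorial : ℝ)) / (((d+1).factorial : ℝ)) else 0 := by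
      intro j hj
      have hjd : j ≤ d := by simpa [Nat.lt_succ_iff] using hj
      by_cases h : j < k v
      · rw [if_pos h, if_pos h, nsmul_eq_mul]
        have hnat : d.choose j * (j.factorial * (d-j).factorial) = d.factorial := by
          have h0 := Nat.choose_mul_factorial_mul_factorial hjd
          rw [← h0]; ring
        have hnR : (d.choose j : ℝ) * ((j.factorial : ℝ) * ((d-j).factorial : ℝ))
            = (d.factorial : ℝ) := by exact_mod_cast hnat
        rw [← mul_div_assoc, hnR]
      · simp [h]
    rw [Finset.sum_congr rfl hterm, ← Finset.sum_filter]
    have hfil : (range (d+1)).filter (fun j => j < k v) = range (k v) := by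
      ext j
      simp only [Finset.mem_filter, Finset.mem_range]
      omega
    rw [hfil, Finset.sum_const, Finset.card_range, nsmul_eq_mul]
    have h1 : ((d+1).factorial : ℝ) = (d+1) * (d.factorial : ℝ) := by
      rw [Nat.factorial_succ]; push_cast; ring
    rw [h1]
    have h2 : (d.factorial : ℝ) ≠ 0 := by positivity
    have h3 : (1 + (d:ℝ)) ≠ 0 := by positivity
    field_simp
    ring
  have hcn : ∀ u ∈ G.neighborFinset v,
      ∑ C ∈ (Finset.univ.erase v).powerset, W C.card * (g u (insert v C) - g u C)
      = (1 + (G.degree u : ℝ) - (k u : ℝ))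
          / ((G.degree u : ℝ) * (1 + (G.degree u : ℝ))) := by
    intro u hu
    have hadj : G.Adj v u := by rwa [← SimpleGraph.mem_neighborFinset]
    have huv : u ≠ v := hadj.ne'
    have hvNu : v ∈ G.neighborFinset u := by
      rw [SimpleGraph.mem_neighborFinset]; exact hadj.symm
    have huNu : u ∉ G.neighborFinset u := by simp
    set A : Finset V := insert u ((G.neighborFinset u).erase v) with hA
    have hvA : v ∉ A := by
      rw [hA]
      simp only [Finset.mem_insert, Finset.mem_erase]
      push_neg
      exact ⟨hadj.ne, fun h => absurd rfl h⟩
    set d := G.degree u with hd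
    have hd1 : 1 ≤ d := by
      have h0 : 0 < (G.neighborFinset u).card := Finset.card_pos.2 ⟨v, hvNu⟩
      rwa [G.card_neighborFinset_eq_degree] at h0
    have hdA : A.card = d := by
      rw [hA, Finset.card_insert_of_notMem (fun h => huNu (Finset.mem_of_mem_erase h)),
        Finset.card_erase_of_mem hvNu, G.card_neighborFinset_eq_degree]
      omega
    obtain ⟨j, hj⟩ : ∃ j, k u = j + 1 := ⟨k u - 1, by have := (hk u).1; omega⟩
    have hjd : j ≤ d := by have := (hk u).2; omega
    have hpt : ∀ C ∈ (Finset.univ.erase v).powerset,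
        W C.card * (g u (insert v C) - g u C)
        = if (u ∉ C ∩ A ∧ (C ∩ A).card = j) then W C.card else 0 := by
      intro C hC
      have hvC : v ∉ C := fun h => Finset.notMem_erase v Finset.univ
        (Finset.mem_powerset.1 hC h)
      by_cases huC : u ∈ C
      · have h1 : g u (insert v C) = 1 := by
          simp [hg, Finset.mem_insert, huC]
        have h2 : g u C = 1 := by simp [hg, huC]
        have huCA : u ∈ C ∩ A := Finset.mem_inter.2 ⟨huC, by simp [hA]⟩
        rw [if_neg (fun h => h.1 huCA), h1, h2]; ring
      · have hCA : C ∩ A = G.neighborFinset u ∩ C := by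
          ext x
          simp only [hA, Finset.mem_inter, Finset.mem_insert, Finset.mem_erase]
          constructor
          · rintro ⟨hxC, (rfl | ⟨hxv, hxN⟩)⟩
            · exact absurd hxC huC
            · exact ⟨hxN, hxC⟩
          · rintro ⟨hxN, hxC⟩
            exact ⟨hxC, Or.inr ⟨fun h => hvC (h ▸ hxC), hxN⟩⟩
        have hNins : G.neighborFinset u ∩ insert v C
            = insert v (G.neighborFinset u ∩ C) := Finset.inter_insert_of_mem hvNu
        have hvNC : v ∉ G.neighborFinset u ∩ C := fun h => hvC (Finset.mem_inter.1 h).2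
        have hcard : (G.neighborFinset u ∩ insert v C).card
            = (G.neighborFinset u ∩ C).card + 1 := by
          rw [hNins, Finset.card_insert_of_notMem hvNC]
        have huins : u ∉ insert v C := by simp [Finset.mem_insert, huv, huC]
        have hg1 : g u (insert v C)
            = if k u ≤ (G.neighborFinset u ∩ C).card + 1 then 1 else 0 := by
          rw [hg]
          simp only [huins, false_or, hcard]
        have hg2 : g u C = if k u ≤ (G.neighborFinset u ∩ C).card then 1 else 0 := by
          rw [hg]
          simp only [huC, false_or]
        have hun : u ∉ G.neighborFinset u ∩ C := fun h => huC (Finset.mem_inter.1 h).2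
        rw [hg1, hg2]
        simp only [hCA]
        by_cases hc : (G.neighborFinset u ∩ C).card = j
        · have c1 : k u ≤ (G.neighborFinset u ∩ C).card + 1 := by omega
          have c2 : ¬ k u ≤ (G.neighborFinset u ∩ C).card := by omega
          rw [if_pos c1, if_neg c2, if_pos (show u ∉ G.neighborFinset u ∩ C
            ∧ (G.neighborFinset u ∩ C).card = j from ⟨hun, hc⟩)]
          ring
        · have c3 : ¬ (u ∉ G.neighborFinset u ∩ C
              ∧ (G.neighborFinset u ∩ C).card = j) := fun h => hc h.2
          rw [if_neg c3]
          by_cases h2 : k u ≤ (G.neighborFinset u ∩ C).card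
          · have c4 : k u ≤ (G.neighborFinset u ∩ C).card + 1 := by omega
            rw [if_pos c4, if_pos h2]; ring
          · have c5 : ¬ k u ≤ (G.neighborFinset u ∩ C).card + 1 := by omega
            rw [if_neg c5, if_neg h2]; ring
    rw [Finset.sum_congr rfl hpt]
    simp only [hW]
    rw [sum_indicator_inter v A hvA (fun B => u ∉ B ∧ B.card = j)]
    rw [← Finset.sum_filter]
    have hfil : A.powerset.filter (fun B => u ∉ B ∧ B.card = j)
        = Finset.powersetCard j (A.erase u) := by
      ext B
      simp only [Finset.mem_filter, Finset.mem_powerset, Finset.mem_powersetCard,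
        Finset.subset_erase]
      tauto
    rw [hfil]
    have hterm : ∀ B ∈ Finset.powersetCard j (A.erase u),
        ((B.card.factorial : ℝ) * ((A.card - B.card).factorial : ℝ))
          / ((A.card + 1).factorial : ℝ)
        = ((j.factorial : ℝ) * ((d - j).factorial : ℝ)) / (((d+1).factorial : ℝ)) := by
      intro B hB
      rw [(Finset.mem_powersetCard.1 hB).2, hdA]
    rw [Finset.sum_congr rfl hterm, Finset.sum_const, Finset.card_powersetCard]
    have hAe : (A.erase u).card = d - 1 := by
      rw [hA, Finset.erase_insert (fun h => huNu (Finset.mem_of_mem_erase h)),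
        Finset.card_erase_of_mem hvNu, G.card_neighborFinset_eq_degree]
    rw [hAe, nsmul_eq_mul, hj]
    rcases eq_or_lt_of_le hjd with rfl | hlt
    · rw [Nat.choose_eq_zero_of_lt (by omega)]
      push_cast
      ring
    · obtain ⟨e, he⟩ : ∃ e, d = j + (e+1) := ⟨d - j - 1, by omega⟩
      rw [he, show j+(e+1)-1 = j+e by omega, show j+(e+1)-j = e+1 by omega,
        show j+(e+1) = j+e+1 by omega]
      have hc : (j+e).choose j * j.factorial * e.factorial = (j+e).factorial := by
        have h0 := Nat.choose_mul_factorial_mul_factorial (show j ≤ j+e by omega)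
        simpa using h0
      have hcR : ((j+e).choose j : ℝ) * (j.factorial : ℝ) * (e.factorial : ℝ)
          = ((j+e).factorial : ℝ) := by exact_mod_cast hc
      have hne1 : (((j+e+1)+1).factorial : ℝ) ≠ 0 := by positivity
      have hne2 : (((j+e+1 : ℕ)) : ℝ) * (1 + (((j+e+1 : ℕ)) : ℝ)) ≠ 0 := by positivity
      rw [← mul_div_assoc, div_eq_div_iff hne1 hne2]
      push_cast [Nat.factorial_succ]
      linear_combination ((e:ℝ)+1) * ((j:ℝ)+(e:ℝ)+1) * ((j:ℝ)+(e:ℝ)+2) * hcR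
  rw [hsh, ← Finset.sum_erase_add _ _ (Finset.mem_univ v), hcv]
  have hsubset : G.neighborFinset v ⊆ Finset.univ.erase v := fun x hx =>
    Finset.mem_erase.2 ⟨((G.mem_neighborFinset v x).1 hx).ne', Finset.mem_univ x⟩
  have hrest : ∑ u ∈ Finset.univ.erase v,
        ∑ C ∈ (Finset.univ.erase v).powerset, W C.card * (g u (insert v C) - g u C)
      = ∑ u ∈ G.neighborFinset v,
        ∑ C ∈ (Finset.univ.erase v).powerset, W C.card * (g u (insert v C) - g u C) :=
    (Finset.sum_subset hsubset
      (fun x hx hnx => hzero x (Finset.mem_erase.1 hx).1 hnx)).symm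
  rw [hrest, Finset.sum_congr rfl hcn]
  exact add_comm _ _
end

section
/- Let G = (V, E) be a finite connected simple undirected graph with graph distance dist, and let dcut : V → ℕ be an arbitrary assignment of cutoff values. For u ∈ V, let extdeg(u) = |{w ∈ V : w ≠ u and dist(u, w) ≤ dcut(u)}|. Define ν₃ : 2^V → ℝ by ν₃(∅) = 0 and, for C ≠ ∅, ν₃(C) = |{u ∈ V : min_{c ∈ C} dist(c, u) ≤ dcut(u)}|. Then for every v ∈ V, the Shapley value of v in the game (V, ν₃) equals Σ_{u ∈ V : dist(v, u) ≤ dcut(u)} 1 / (1 + extdeg(u)). -/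
open Finset
open scoped Classical

lemma key_sum (n m : ℕ) (h : m < n) :
    ∑ k ∈ Finset.range (m+1),
      ((m.descFactorial k * (n - k - 1).factorial : ℕ) : ℝ) / (n.factorial : ℝ)
      = 1 / ((n : ℝ) - m) := by
  have hnm : (0:ℝ) < (n:ℝ) - m := by
    have : (m:ℝ) < n := by exact_mod_cast h
    linarith
  have hfac : (0:ℝ) < (n.factorial : ℝ) := by exact_mod_cast n.factorial_pos
  set b : ℕ → ℝ := fun k => ((m.descFactorial k * (n - k).factorial : ℕ) : ℝ) with hb
  have hterm : ∀ k ∈ Finset.range (m+1),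
      ((m.descFactorial k * (n - k - 1).factorial : ℕ) : ℝ) / (n.factorial : ℝ)
        = (b k - b (k+1)) / (((n:ℝ) - m) * (n.factorial : ℝ)) := by
    intro k hk
    rw [Finset.mem_range, Nat.lt_succ_iff] at hk
    have h1 : n - k = (n - k - 1) + 1 := by omega
    have h2 : m.descFactorial (k+1) = (m - k) * m.descFactorial k :=
      Nat.descFactorial_succ m k
    have h3 : (n - (k+1)) = n - k - 1 := by omega
    have h4 : (n - k).factorial = (n - k) * (n - k - 1).factorial := by
      conv_lhs => rw [h1]
      rw [Nat.factorial_succ, ← h1]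
    simp only [hb, h2, h3, h4]
    push_cast
    have hc2 : ((m - k : ℕ) : ℝ) = (m:ℝ) - k := by
      push_cast [Nat.cast_sub hk]; ring
    have hc3 : ((n - k : ℕ) : ℝ) = (n:ℝ) - k := by
      push_cast [Nat.cast_sub (by omega : k ≤ n)]; ring
    rw [hc3, hc2]
    field_simp
    ring
  rw [Finset.sum_congr rfl hterm, ← Finset.sum_div, Finset.sum_range_sub' b]
  have hb0 : b 0 = (n.factorial : ℝ) := by simp [hb]
  have hbm : b (m+1) = 0 := by
    simp [hb, Nat.descFactorial_of_lt (Nat.lt_succ_self m)]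
  rw [hb0, hbm]
  field_simp
  ring

/-- For a connected graph with node-dependent distance cutoffs `dcut`, in the game
where `ν(C)` counts nodes `u` within distance `dcut u` of `C`, the Shapley value of
`v` equals `Σ_{u : dist(v,u) ≤ dcut u} 1/(1 + extdeg u)`, where
`extdeg u = |{w ≠ u : dist(u,w) ≤ dcut u}|`. -/
theorem shapley_cutoff_distance_game {V : Type*} [Fintype V]
    (G : SimpleGraph V) (hG : G.Connected) (dcut : V → ℕ)
    (extdeg : V → ℕ)
    (hext : ∀ u : V,
      extdeg u = (Finset.univ.filter (fun w => w ≠ u ∧ G.dist u w ≤ dcut u)).card)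
    (ν : Finset V → ℝ)
    (hν : ∀ C : Finset V,
      ν C = ((Finset.univ.filter (fun u => ∃ c ∈ C, G.dist c u ≤ dcut u)).card : ℝ))
    (v : V) :
    shapley ν v
      = ∑ u ∈ Finset.univ.filter (fun u => G.dist v u ≤ dcut u),
          1 / (1 + (extdeg u : ℝ)) := by
  classical
  set n := Fintype.card V with hn
  set S : V → Finset V := fun u => Finset.univ.filter (fun c => G.dist c u ≤ dcut u) with hS
  have huS : ∀ u : V, u ∈ S u := by
    intro u
    simp [hS, SimpleGraph.dist_self]
  have hcardS : ∀ u : V, (S u).card = extdeg u + 1 := by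
    intro u
    have : S u = insert u (Finset.univ.filter (fun w => w ≠ u ∧ G.dist u w ≤ dcut u)) := by
      ext c
      simp only [hS, mem_filter, mem_univ, true_and, mem_insert]
      constructor
      · intro hc
        by_cases hcu : c = u
        · exact Or.inl hcu
        · exact Or.inr ⟨hcu, by rwa [G.dist_comm]⟩
      · rintro (rfl | ⟨hne, hd⟩)
        · simp [SimpleGraph.dist_self]
        · rwa [G.dist_comm] at hd
    rw [this, Finset.card_insert_of_notMem (by simp), ← hext]
  -- indicator form of the marginal contribution
  have hdiff : ∀ C : Finset V, ν (insert v C) - ν C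
      = ∑ u : V, (if G.dist v u ≤ dcut u ∧ ¬ (∃ c ∈ C, G.dist c u ≤ dcut u)
          then (1:ℝ) else 0) := by
    intro C
    rw [hν, hν, Finset.card_filter, Finset.card_filter]
    push_cast
    rw [← Finset.sum_sub_distrib]
    refine Finset.sum_congr rfl fun u _ => ?_
    by_cases h1 : ∃ c ∈ C, G.dist c u ≤ dcut u
    · have h2 : ∃ c ∈ insert v C, G.dist c u ≤ dcut u := by
        obtain ⟨c, hc, hcd⟩ := h1
        exact ⟨c, Finset.mem_insert_of_mem hc, hcd⟩
      simp [h1, h2]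
    · by_cases h3 : G.dist v u ≤ dcut u
      · have h2 : ∃ c ∈ insert v C, G.dist c u ≤ dcut u :=
          ⟨v, Finset.mem_insert_self v C, h3⟩
        simp [h1, h2, h3]
      · have h2 : ¬ ∃ c ∈ insert v C, G.dist c u ≤ dcut u := by
          rintro ⟨c, hc, hcd⟩
          rcases Finset.mem_insert.1 hc with rfl | hc
          · exact h3 hcd
          · exact h1 ⟨c, hc, hcd⟩
        simp [h1, h2, h3]
  rw [shapley]
  simp only [hdiff, Finset.mul_sum]
  rw [Finset.sum_comm, Finset.sum_filter]
  refine Finset.sum_congr rfl fun u _ => ?_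
  by_cases hvu : G.dist v u ≤ dcut u
  · simp only [hvu, true_and, if_true, mul_ite, mul_one, mul_zero]
    rw [← Finset.sum_filter]
    have hset : ((Finset.univ.erase v).powerset.filter
        (fun C => ¬ ∃ c ∈ C, G.dist c u ≤ dcut u)) = (Finset.univ \ S u).powerset := by
      ext C
      simp only [Finset.mem_filter, Finset.mem_powerset]
      constructor
      · rintro ⟨hsub, hno⟩
        intro c hc
        rw [Finset.mem_sdiff]
        refine ⟨Finset.mem_univ c, ?_⟩
        simp only [hS, Finset.mem_filter, Finset.mem_univ, true_and]
        exact fun hd => hno ⟨c, hc, hd⟩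
      · intro hsub
        constructor
        · intro c hc
          have := hsub hc
          rw [Finset.mem_sdiff] at this
          refine Finset.mem_erase.2 ⟨?_, Finset.mem_univ c⟩
          intro hcv
          exact this.2 (by
            simp only [hS, Finset.mem_filter, Finset.mem_univ, true_and]
            rw [hcv]; exact hvu)
        · rintro ⟨c, hc, hd⟩
          have := hsub hc
          rw [Finset.mem_sdiff] at this
          exact this.2 (by simp only [hS, Finset.mem_filter, Finset.mem_univ, true_and]; exact hd)
    rw [hset]
    set m := (Finset.univ \ S u).card with hm
    have hSle : (S u).card ≤ n := by
      simpa [hn] using Finset.card_le_univ (S u)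
    have hmcard : m = n - (S u).card := by
      rw [hm, Finset.card_sdiff_of_subset (Finset.subset_univ _), Finset.card_univ]
    have hnpos : 0 < n := by
      rw [hn]; exact Fintype.card_pos_iff.2 ⟨v⟩
    have hSpos : 0 < (S u).card := Finset.card_pos.2 ⟨u, huS u⟩
    have hmn : m < n := by omega
    have hLHS : ∑ C ∈ (Finset.univ \ S u).powerset,
        ((C.card.factorial : ℝ) * ((n - C.card - 1).factorial : ℝ)) / (n.factorial : ℝ)
        = ∑ k ∈ Finset.range (m+1),
            ((m.descFactorial k * (n - k - 1).factorial : ℕ) : ℝ) / (n.factorial : ℝ) := by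
      rw [Finset.sum_powerset_apply_card
        (fun k => ((k.factorial : ℝ) * ((n - k - 1).factorial : ℝ)) / (n.factorial : ℝ))]
      refine Finset.sum_congr rfl fun k _ => ?_
      rw [nsmul_eq_mul]
      push_cast [Nat.descFactorial_eq_factorial_mul_choose]
      ring
    rw [hLHS, key_sum n m hmn]
    have : ((n:ℝ) - m) = 1 + (extdeg u : ℝ) := by
      have h1 : (S u).card = extdeg u + 1 := hcardS u
      have h3 : extdeg u + 1 ≤ n := by omega
      rw [hmcard, h1, Nat.cast_sub h3]
      push_cast
      ring
    rw [this]
  · simp [hvu]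
end

section
/- Let G = (V, E) be a finite connected simple undirected graph. Then for every vertex v ∈ V and every subset C ⊆ V, the marginal contribution of v to the group betweenness centrality satisfies c_gb(C ∪ {v}) − c_gb(C) ≤ c_b(v), where c_b(v) is the (ordered-pair) betweenness centrality of v. -/
open Finset
open scoped Classical

variable {V : Type*}

/-- The number of shortest paths from `s` to `t` (walks of length `dist s t`;
for `s = t` this is `1`, the empty walk). -/
noncomputable def numSP [Fintype V] [DecidableEq V] (G : SimpleGraph V)
    [DecidableRel G.Adj] (s t : V) : ℕ :=
  (G.finsetWalkLength (G.dist s t) s t).card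

/-- The number of shortest paths from `s` to `t` passing through `v`
(`0` when `v ∈ {s, t}`). -/
noncomputable def numSPthrough [Fintype V] [DecidableEq V] (G : SimpleGraph V)
    [DecidableRel G.Adj] (s t v : V) : ℕ :=
  if v = s ∨ v = t then 0
  else ((G.finsetWalkLength (G.dist s t) s t).filter (fun p => v ∈ p.support)).card

/-- The number of shortest paths from `s` to `t` passing through at least one vertex
of `C` (`0` when `s ∈ C` or `t ∈ C`). -/
noncomputable def numSPthroughSet [Fintype V] [DecidableEq V] (G : SimpleGraph V)
    [DecidableRel G.Adj] (s t : V) (C : Finset V) : ℕ :=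
  if s ∈ C ∨ t ∈ C then 0
  else ((G.finsetWalkLength (G.dist s t) s t).filter
    (fun p => ∃ c ∈ C, c ∈ p.support)).card

/-- The (ordered-pair) betweenness centrality of a vertex `v`. -/
noncomputable def betw [Fintype V] [DecidableEq V] (G : SimpleGraph V)
    [DecidableRel G.Adj] (v : V) : ℝ :=
  ∑ s ∈ Finset.univ.erase v, ∑ t ∈ Finset.univ.erase v,
    (numSPthrough G s t v : ℝ) / (numSP G s t : ℝ)

/-- The group betweenness centrality of a set of vertices `C`. -/
noncomputable def groupBetw [Fintype V] [DecidableEq V] (G : SimpleGraph V)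
    [DecidableRel G.Adj] (C : Finset V) : ℝ :=
  ∑ s ∈ Finset.univ \ C, ∑ t ∈ Finset.univ \ C,
    (numSPthroughSet G s t C : ℝ) / (numSP G s t : ℝ)


private lemma pointwise_count [Fintype V] [DecidableEq V] (G : SimpleGraph V)
    [DecidableRel G.Adj] (v : V) (C : Finset V) {s t : V}
    (hs : s ∉ insert v C) (ht : t ∉ insert v C) :
    numSPthroughSet G s t (insert v C) ≤ numSPthroughSet G s t C + numSPthrough G s t v := by
  simp only [Finset.mem_insert, not_or] at hs ht
  unfold numSPthroughSet numSPthrough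
  rw [if_neg (by simp [hs.1, hs.2, ht.1, ht.2]), if_neg (by simp [hs.2, ht.2]),
    if_neg (by push_neg; exact ⟨Ne.symm hs.1, Ne.symm ht.1⟩)]
  have heq : ((G.finsetWalkLength (G.dist s t) s t).filter
      (fun p => ∃ c ∈ insert v C, c ∈ p.support)) =
      ((G.finsetWalkLength (G.dist s t) s t).filter (fun p => v ∈ p.support)) ∪
      ((G.finsetWalkLength (G.dist s t) s t).filter (fun p => ∃ c ∈ C, c ∈ p.support)) := by
    rw [← Finset.filter_or]
    apply Finset.filter_congr
    intro p _
    simp [Finset.exists_mem_insert]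
  rw [heq]
  calc _ ≤ _ := Finset.card_union_le _ _
    _ = _ := Nat.add_comm _ _

/-- The marginal contribution of any vertex `v` to the group betweenness centrality
of any set `C` is at most the betweenness centrality of `v`. -/
theorem groupBetw_marginal_le_betw [Fintype V] [DecidableEq V]
    (G : SimpleGraph V) [DecidableRel G.Adj] (hG : G.Connected)
    (v : V) (C : Finset V) :
    groupBetw G (insert v C) - groupBetw G C ≤ betw G v := by
  classical
  set S := Finset.univ \ insert v C with hS
  have key : groupBetw G (insert v C) ≤
      (∑ s ∈ S, ∑ t ∈ S, (numSPthroughSet G s t C : ℝ) / (numSP G s t : ℝ)) +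
      (∑ s ∈ S, ∑ t ∈ S, (numSPthrough G s t v : ℝ) / (numSP G s t : ℝ)) := by
    rw [← Finset.sum_add_distrib]
    unfold groupBetw
    apply Finset.sum_le_sum
    intro s hs
    rw [← Finset.sum_add_distrib]
    apply Finset.sum_le_sum
    intro t ht
    rw [← add_div]
    rcases Nat.eq_zero_or_pos (numSP G s t) with h | h
    · simp [h]
    · rw [div_le_div_iff_of_pos_right (by exact_mod_cast h)]
      have hs' : s ∉ insert v C := by simpa [hS] using hs
      have ht' : t ∉ insert v C := by simpa [hS] using ht
      exact_mod_cast pointwise_count G v C hs' ht'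
  have hsub1 : S ⊆ Finset.univ \ C := by
    intro x hx
    simp only [hS, Finset.mem_sdiff, Finset.mem_insert, not_or] at hx ⊢
    exact ⟨hx.1, hx.2.2⟩
  have hsub2 : S ⊆ Finset.univ.erase v := by
    intro x hx
    simp only [hS, Finset.mem_sdiff, Finset.mem_insert, not_or, Finset.mem_erase] at hx ⊢
    exact ⟨hx.2.1, hx.1⟩
  have h2 : (∑ s ∈ S, ∑ t ∈ S, (numSPthroughSet G s t C : ℝ) / (numSP G s t : ℝ)) ≤
      groupBetw G C := by
    unfold groupBetw
    calc (∑ s ∈ S, ∑ t ∈ S, (numSPthroughSet G s t C : ℝ) / (numSP G s t : ℝ))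
        ≤ ∑ s ∈ S, ∑ t ∈ Finset.univ \ C, (numSPthroughSet G s t C : ℝ) / (numSP G s t : ℝ) :=
          Finset.sum_le_sum fun s _ =>
            Finset.sum_le_sum_of_subset_of_nonneg hsub1 fun t _ _ => by positivity
      _ ≤ _ := Finset.sum_le_sum_of_subset_of_nonneg hsub1 fun s _ _ =>
            Finset.sum_nonneg fun t _ => by positivity
  have h3 : (∑ s ∈ S, ∑ t ∈ S, (numSPthrough G s t v : ℝ) / (numSP G s t : ℝ)) ≤
      betw G v := by
    unfold betw
    calc (∑ s ∈ S, ∑ t ∈ S, (numSPthrough G s t v : ℝ) / (numSP G s t : ℝ))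
        ≤ ∑ s ∈ S, ∑ t ∈ Finset.univ.erase v, (numSPthrough G s t v : ℝ) / (numSP G s t : ℝ) :=
          Finset.sum_le_sum fun s _ =>
            Finset.sum_le_sum_of_subset_of_nonneg hsub2 fun t _ _ => by positivity
      _ ≤ _ := Finset.sum_le_sum_of_subset_of_nonneg hsub2 fun s _ _ =>
            Finset.sum_nonneg fun t _ => by positivity
  linarith
end

section
/- Let G = (V, E) be a finite connected simple undirected graph, let s ∈ V, and let f : ℕ → ℝ be an arbitrary function. Define the one-side dependency δ_s(v) = Σ_{t ∈ V} (σ_st(v)/σ_st) · f(dist(s, t) + 1). Then for every v ∈ V with v ≠ s, the recursion δ_s(v) = Σ_{w : {v, w} ∈ E and dist(s, w) = dist(s, v) + 1} (σ_sv / σ_sw) · ( f(dist(s, w) + 1) + δ_s(w) ) holds. -/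
open Finset
open scoped Classical

variable {V : Type*}

/-- In a simple graph, a walk is determined by its support. -/
private lemma walk_support_injective {G : SimpleGraph V} {u v : V} (p : G.Walk u v) :
    ∀ q : G.Walk u v, p.support = q.support → p = q := by
  induction p with
  | nil =>
    intro q h
    cases q with
    | nil => rfl
    | cons h' q' =>
      exfalso
      have := congrArg List.length h
      simp [SimpleGraph.Walk.length_support] at this
  | cons h p ih =>
    intro q hq
    cases q with
    | nil =>
      exfalso
      have := congrArg List.length hq
      simp [SimpleGraph.Walk.length_support] at this
    | cons h' q' =>
      rw [SimpleGraph.Walk.support_cons, SimpleGraph.Walk.support_cons,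
        List.cons.injEq] at hq
      have hq2 := hq.2
      have hxy := hq2
      rw [p.support_eq_cons, q'.support_eq_cons, List.cons.injEq] at hxy
      obtain ⟨rfl, -⟩ := hxy
      rw [ih q' hq2]

/-- Splitting shortest `s–t` walks at a vertex `u` on them:
`σ_st(u-through, as a set) = σ_su · #(walks u→t of length dist s t - dist s u)`. -/
private lemma card_filter_through {G : SimpleGraph V} [Fintype V] [DecidableEq V]
    [DecidableRel G.Adj] (hG : G.Connected) (s t u : V) :
    ((G.finsetWalkLength (G.dist s t) s t).filter (fun p => u ∈ p.support)).card
      = (G.finsetWalkLength (G.dist s u) s u).card *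
        (G.finsetWalkLength (G.dist s t - G.dist s u) u t).card := by
  rw [← Finset.card_product]
  refine (Finset.card_bij (fun qr _ => qr.1.append qr.2) ?_ ?_ ?_).symm
  · rintro ⟨q, r⟩ hqr
    rw [Finset.mem_product, SimpleGraph.mem_finsetWalkLength_iff,
      SimpleGraph.mem_finsetWalkLength_iff] at hqr
    obtain ⟨hq, hr⟩ := hqr
    rw [Finset.mem_filter]
    refine ⟨?_, ?_⟩
    · rw [SimpleGraph.mem_finsetWalkLength_iff, SimpleGraph.Walk.length_append, hq, hr]
      have hle : G.dist s u ≤ G.dist s t := by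
        by_contra hlt
        push_neg at hlt
        have h0 : G.dist s t - G.dist s u = 0 := Nat.sub_eq_zero_of_le hlt.le
        have hut : u = t := SimpleGraph.Walk.eq_of_length_eq_zero (by rw [hr, h0])
        subst hut
        omega
      omega
    · simp [SimpleGraph.Walk.mem_support_append_iff]
  · rintro ⟨q, r⟩ hqr ⟨q', r'⟩ hqr' heq
    rw [Finset.mem_product, SimpleGraph.mem_finsetWalkLength_iff,
      SimpleGraph.mem_finsetWalkLength_iff] at hqr hqr'
    have hsup := congrArg SimpleGraph.Walk.support heq
    rw [SimpleGraph.Walk.support_append, SimpleGraph.Walk.support_append] at hsup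
    have hlen : q.support.length = q'.support.length := by
      rw [SimpleGraph.Walk.length_support, SimpleGraph.Walk.length_support, hqr.1, hqr'.1]
    obtain ⟨h1, h2⟩ := List.append_inj hsup hlen
    have hqe : q = q' := walk_support_injective q q' h1
    have hre : r = r' := by
      refine walk_support_injective r r' ?_
      rw [r.support_eq_cons, r'.support_eq_cons, h2]
    simp [hqe, hre]
  · intro p hp
    rw [Finset.mem_filter] at hp
    obtain ⟨hpm, hu⟩ := hp
    rw [SimpleGraph.mem_finsetWalkLength_iff] at hpm
    refine ⟨(p.takeUntil u hu, p.dropUntil u hu), ?_, p.take_spec hu⟩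
    rw [Finset.mem_product, SimpleGraph.mem_finsetWalkLength_iff,
      SimpleGraph.mem_finsetWalkLength_iff]
    dsimp only
    have hadd : (p.takeUntil u hu).length + (p.dropUntil u hu).length = p.length := by
      have := congrArg SimpleGraph.Walk.length (p.take_spec hu)
      rwa [SimpleGraph.Walk.length_append] at this
    have h1 : G.dist s u ≤ (p.takeUntil u hu).length := SimpleGraph.dist_le _
    have h2 : G.dist u t ≤ (p.dropUntil u hu).length := SimpleGraph.dist_le _
    have h3 : G.dist s t ≤ G.dist s u + G.dist u t := hG.dist_triangle
    omega

private lemma card_fwl_adj {G : SimpleGraph V} [Fintype V] [DecidableEq V]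
    [DecidableRel G.Adj] (n : ℕ) (u v : V) :
    (G.finsetWalkLength n u v).card = (G.adjMatrix ℕ ^ n) u v := by
  have h := G.adjMatrix_pow_apply_eq_card_walk (α := ℕ) n u v
  rw [Nat.cast_id, SimpleGraph.card_set_walk_length_eq] at h
  exact h.symm

private lemma card_fwl_succ {G : SimpleGraph V} [Fintype V] [DecidableEq V]
    [DecidableRel G.Adj] (m : ℕ) (u t : V) :
    (G.finsetWalkLength (m + 1) u t).card
      = ∑ w ∈ G.neighborFinset u, (G.finsetWalkLength m w t).card := by
  rw [card_fwl_adj, pow_succ', SimpleGraph.adjMatrix_mul_apply]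
  exact Finset.sum_congr rfl fun w _ => (card_fwl_adj m w t).symm

private lemma card_fwl_zero_ne {G : SimpleGraph V} [Fintype V] [DecidableEq V]
    [DecidableRel G.Adj] {u v : V} (h : u ≠ v) :
    (G.finsetWalkLength 0 u v).card = 0 := by
  rw [Finset.card_eq_zero, Finset.eq_empty_iff_forall_notMem]
  intro p hp
  rw [SimpleGraph.mem_finsetWalkLength_iff] at hp
  exact h (SimpleGraph.Walk.eq_of_length_eq_zero hp)

private lemma card_fwl_zero_self {G : SimpleGraph V} [Fintype V] [DecidableEq V]
    [DecidableRel G.Adj] (u : V) :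
    (G.finsetWalkLength 0 u u).card = 1 := by
  have : G.finsetWalkLength 0 u u = {SimpleGraph.Walk.nil} := by
    ext p
    simp [SimpleGraph.mem_finsetWalkLength_iff]
  rw [this, Finset.card_singleton]

private lemma through_eq {G : SimpleGraph V} [Fintype V] [DecidableEq V]
    [DecidableRel G.Adj] (hG : G.Connected) {s t u : V} (hus : u ≠ s) (hut : u ≠ t) :
    numSPthrough G s t u
      = numSP G s u * (G.finsetWalkLength (G.dist s t - G.dist s u) u t).card := by
  rw [numSPthrough, if_neg (by tauto), numSP]
  exact card_filter_through hG s t u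

/-- If there is a walk `w → t` of length `dist s t - dist s v - 1` and `w` is adjacent
to `v`, then `dist s w = dist s v + 1`. -/
private lemma dist_succ_of_walk {G : SimpleGraph V} [Fintype V] [DecidableEq V]
    [DecidableRel G.Adj] (hG : G.Connected) {s v w t : V} (hadj : G.Adj v w)
    (hk : G.dist s v + 1 ≤ G.dist s t)
    (hcard : (G.finsetWalkLength (G.dist s t - G.dist s v - 1) w t).card ≠ 0) :
    G.dist s w = G.dist s v + 1 := by
  obtain ⟨p, hp⟩ := Finset.card_ne_zero.mp hcard
  rw [SimpleGraph.mem_finsetWalkLength_iff] at hp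
  have h1 : G.dist w t ≤ G.dist s t - G.dist s v - 1 := hp ▸ SimpleGraph.dist_le p
  have h2 : G.dist s t ≤ G.dist s w + G.dist w t := hG.dist_triangle
  have h3 : G.dist s w ≤ G.dist s v + G.dist v w := hG.dist_triangle
  have h4 : G.dist v w ≤ 1 := by
    simpa using SimpleGraph.dist_le (SimpleGraph.Walk.cons hadj SimpleGraph.Walk.nil)
  omega

/-- The key combinatorial identity. -/
private lemma star {G : SimpleGraph V} [Fintype V] [DecidableEq V]
    [DecidableRel G.Adj] (hG : G.Connected) (s v : V) (hvs : v ≠ s) (t : V) :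
    numSPthrough G s t v
      = ∑ w ∈ Finset.univ.filter (fun w => G.Adj v w ∧ G.dist s w = G.dist s v + 1),
          numSP G s v * (G.finsetWalkLength (G.dist s t - G.dist s v - 1) w t).card := by
  by_cases htv : t = v
  · subst htv
    rw [numSPthrough, if_pos (Or.inr rfl)]
    refine (Finset.sum_eq_zero ?_).symm
    intro w hw
    rw [Finset.mem_filter] at hw
    have h0 : G.dist s t - G.dist s t - 1 = 0 := by omega
    rw [h0]
    have hwt : w ≠ t := fun h => G.irrefl (h ▸ hw.2.1)
    rw [card_fwl_zero_ne hwt, mul_zero]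
  · have hvt : v ≠ t := fun h => htv h.symm
    rw [through_eq hG hvs hvt, ← Finset.mul_sum]
    congr 1
    rcases Nat.lt_or_ge (G.dist s t) (G.dist s v + 1) with hlt | hge
    · -- dist s t ≤ dist s v : both sides vanish
      have h0 : G.dist s t - G.dist s v = 0 := by omega
      rw [h0, card_fwl_zero_ne hvt]
      refine (Finset.sum_eq_zero ?_).symm
      intro w hw
      rw [Finset.mem_filter] at hw
      rw [Nat.zero_sub]
      have hwt : w ≠ t := by
        rintro rfl
        omega
      exact card_fwl_zero_ne hwt
    · obtain ⟨m, hm⟩ : ∃ m, G.dist s t - G.dist s v = m + 1 :=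
        ⟨G.dist s t - G.dist s v - 1, by omega⟩
      have hm' : G.dist s t - G.dist s v - 1 = m := by omega
      rw [hm', hm, card_fwl_succ]
      refine (Finset.sum_subset ?_ ?_).symm
      · intro w hw
        rw [Finset.mem_filter] at hw
        rw [SimpleGraph.mem_neighborFinset]
        exact hw.2.1
      · intro w hwn hwf
        rw [SimpleGraph.mem_neighborFinset] at hwn
        rw [Finset.mem_filter] at hwf
        by_contra hne
        exact hwf ⟨Finset.mem_univ w, hwn,
          dist_succ_of_walk hG hwn hge (by rwa [hm'])⟩

/-- Brandes-style recursion for the generalized one-side dependency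
`δ_s(v) = Σ_t (σ_st(v)/σ_st)·f(dist(s,t)+1)`: for `v ≠ s`,
`δ_s(v) = Σ_{w : v~w, dist(s,w)=dist(s,v)+1} (σ_sv/σ_sw)·(f(dist(s,w)+1) + δ_s(w))`. -/
theorem oneSideDependency_recursion [Fintype V] [DecidableEq V]
    (G : SimpleGraph V) [DecidableRel G.Adj] (hG : G.Connected)
    (s : V) (f : ℕ → ℝ) (δ : V → ℝ)
    (hδ : ∀ v : V,
      δ v = ∑ t : V, ((numSPthrough G s t v : ℝ) / (numSP G s t : ℝ))
        * f (G.dist s t + 1))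
    (v : V) (hv : v ≠ s) :
    δ v = ∑ w ∈ Finset.univ.filter
        (fun w => G.Adj v w ∧ G.dist s w = G.dist s v + 1),
      ((numSP G s v : ℝ) / (numSP G s w : ℝ)) * (f (G.dist s w + 1) + δ w) := by
  have hσ : ∀ t : V, (numSP G s t : ℝ) ≠ 0 := by
    intro t
    obtain ⟨p, hp⟩ := hG.exists_walk_length_eq_dist s t
    have hm : p ∈ G.finsetWalkLength (G.dist s t) s t :=
      SimpleGraph.mem_finsetWalkLength_iff.mpr hp
    have : 0 < numSP G s t := Finset.card_pos.mpr ⟨p, hm⟩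
    exact_mod_cast this.ne'
  set W := Finset.univ.filter (fun w => G.Adj v w ∧ G.dist s w = G.dist s v + 1) with hW
  calc δ v = ∑ t : V, ((numSPthrough G s t v : ℝ) / (numSP G s t : ℝ))
        * f (G.dist s t + 1) := hδ v
    _ = ∑ t : V, ∑ w ∈ W, (numSP G s v : ℝ)
        * ((G.finsetWalkLength (G.dist s t - G.dist s v - 1) w t).card : ℝ)
        / (numSP G s t : ℝ) * f (G.dist s t + 1) := by
        refine Finset.sum_congr rfl fun t _ => ?_
        rw [show ((numSPthrough G s t v : ℝ)) = ∑ w ∈ W, (numSP G s v : ℝ)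
            * ((G.finsetWalkLength (G.dist s t - G.dist s v - 1) w t).card : ℝ) by
          rw [star hG s v hv t]; push_cast; ring]
        rw [Finset.sum_div, Finset.sum_mul]
    _ = ∑ w ∈ W, ∑ t : V, (numSP G s v : ℝ)
        * ((G.finsetWalkLength (G.dist s t - G.dist s v - 1) w t).card : ℝ)
        / (numSP G s t : ℝ) * f (G.dist s t + 1) := Finset.sum_comm
    _ = ∑ w ∈ W, ((numSP G s v : ℝ) / (numSP G s w : ℝ))
        * (f (G.dist s w + 1) + δ w) := by
        refine Finset.sum_congr rfl fun w hw => ?_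
        rw [hW, Finset.mem_filter] at hw
        obtain ⟨-, hadj, hdw⟩ := hw
        have hws : w ≠ s := by
          intro h
          rw [h, SimpleGraph.dist_self] at hdw
          omega
        rw [hδ w, mul_add, Finset.mul_sum]
        rw [← Finset.add_sum_erase (Finset.univ) _ (Finset.mem_univ w),
          ← Finset.add_sum_erase (Finset.univ)
            (fun t => (numSP G s v : ℝ) / (numSP G s w : ℝ)
              * ((numSPthrough G s t w : ℝ) / (numSP G s t : ℝ) * f (G.dist s t + 1)))
            (Finset.mem_univ w)]
        have hww : (numSPthrough G s w w : ℝ) = 0 := by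
          rw [numSPthrough, if_pos (Or.inr rfl)]; norm_num
        have hcww : ((G.finsetWalkLength (G.dist s w - G.dist s v - 1) w w).card : ℝ) = 1 := by
          rw [hdw, show G.dist s v + 1 - G.dist s v - 1 = 0 by omega, card_fwl_zero_self]
          norm_num
        have h1 : (numSP G s v : ℝ)
            * ((G.finsetWalkLength (G.dist s w - G.dist s v - 1) w w).card : ℝ)
            / (numSP G s w : ℝ) * f (G.dist s w + 1)
            = (numSP G s v : ℝ) / (numSP G s w : ℝ) * f (G.dist s w + 1)
              + (numSP G s v : ℝ) / (numSP G s w : ℝ)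
                * ((numSPthrough G s w w : ℝ) / (numSP G s w : ℝ) * f (G.dist s w + 1)) := by
          rw [hww, hcww]; ring
        rw [h1, add_assoc]
        congr 1
        congr 1
        refine Finset.sum_congr rfl fun t ht => ?_
        have htw : w ≠ t := (Finset.ne_of_mem_erase ht).symm
        have hτ : (numSPthrough G s t w : ℝ) = (numSP G s w : ℝ)
            * ((G.finsetWalkLength (G.dist s t - G.dist s v - 1) w t).card : ℝ) := by
          rw [through_eq hG hws htw, hdw, ← Nat.sub_sub]
          push_cast; ring
        rw [hτ]
        ring_nf
        exact (mul_inv_cancel_right₀ (hσ w) _).symm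
end

section
/- Let A be a finite set. For every generalized characteristic function ν mapping ordered coalitions over A to ℝ with ν(∅) = 0, there exists a weight function w mapping ordered coalitions over A to ℝ such that for every ordered coalition T, ν(T) = Σ_{S : S ⊑ T, S ≠ ∅} w(S), where the sum ranges over all nonempty subsequences S of T. -/
open Finset

private def wAux {α : Type*} [DecidableEq α] (ν : List α → ℝ) : List α → ℝ
  | S => ν S - ∑ S' ∈ ((S.sublists.toFinset.erase []).erase S).attach, wAux ν S'.1
  termination_by S => S.length
  decreasing_by
    have h := S'.2
    have h1 : S'.1 ≠ S := (Finset.mem_erase.mp h).1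
    have h2 : S'.1.Sublist S := by
      have := (Finset.mem_erase.mp (Finset.mem_erase.mp h).2).2
      simpa [List.mem_sublists] using List.mem_toFinset.mp this
    exact lt_of_le_of_ne (h2.length_le) (fun hl => h1 (h2.eq_of_length hl))

/-- Every generalized characteristic function (on duplicate-free ordered coalitions,
with `ν(∅) = 0`) can be written as a sum of weights over nonempty subsequences:
there is `w` such that `ν(T) = Σ_{∅ ≠ S ⊑ T} w(S)` for every ordered coalition `T`. -/
theorem generalized_char_fun_has_weight_representation {α : Type*} [Fintype α]
    [DecidableEq α] (ν : List α → ℝ) (hν : ν [] = 0) :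
    ∃ w : List α → ℝ, ∀ T : List α, T.Nodup →
      ν T = ∑ S ∈ T.sublists.toFinset.erase [], w S := by
  refine ⟨wAux ν, fun T _ => ?_⟩
  rcases eq_or_ne T [] with rfl | hT
  · simp [hν]
  · have hmem : T ∈ T.sublists.toFinset.erase [] := by
      simp [List.mem_sublists, hT, Ne.symm hT]
    rw [← Finset.add_sum_erase _ _ hmem, wAux]
    rw [Finset.sum_attach ((T.sublists.toFinset.erase []).erase T) (wAux ν)]
    ring
end

section
/- Let A be a finite set of players with |A| = n, let ν be a generalized characteristic function on ordered coalitions over A, and let a_i ∈ A. Then the Nowak–Radzik value of a_i, defined as the average over all orderings T of A of the marginal contribution ν((T(a_i), a_i)) − ν(T(a_i)), satisfies (1/n!) · Σ_{T ∈ Π(A)} [ν((T(a_i), a_i)) − ν(T(a_i))] = Σ_{C ⊆ A∖{a_i}} Σ_{T ∈ Π(C)} ((n − |T| − 1)!/n!) · [ν((T, a_i)) − ν(T)]. -/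
open Finset

private lemma fiber_filter_eq {α : Type*} [Fintype α] [DecidableEq α] (i : α)
    (L : List α) (hL : L.Nodup) (hiL : i ∉ L) :
    Finset.filter (fun T => T.takeWhile (fun x => decide (x ≠ i)) = L)
        ((Finset.univ : Finset α).toList.permutations).toFinset
      = ((((Finset.univ : Finset α) \ insert i L.toFinset).toList.permutations).toFinset).image
          (fun r => L ++ i :: r) := by
  ext T
  simp only [Finset.mem_filter, List.mem_toFinset, List.mem_permutations, Finset.mem_image]
  constructor
  · rintro ⟨hT, hpre⟩
    have hTnd : T.Nodup := hT.symm.nodup (Finset.nodup_toList _)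
    have hiT : i ∈ T := hT.mem_iff.2 (by simp [Finset.mem_toList])
    have hd : T.dropWhile (fun x => decide (x ≠ i)) ≠ [] := by
      intro h
      rw [List.dropWhile_eq_nil_iff] at h
      have := h i hiT
      simp at this
    have hhead : (T.dropWhile (fun x => decide (x ≠ i))).head hd = i := by
      have := List.head_dropWhile_not (fun x => decide (x ≠ i)) (l := T) hd
      simpa using this
    have hdrop : T.dropWhile (fun x => decide (x ≠ i))
        = i :: (T.dropWhile (fun x => decide (x ≠ i))).tail := by
      conv_lhs => rw [← List.cons_head_tail hd, hhead]
    set r := (T.dropWhile (fun x => decide (x ≠ i))).tail with hr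
    have hTeq : T = L ++ i :: r := by
      conv_lhs => rw [← List.takeWhile_append_dropWhile (p := fun x => decide (x ≠ i)) (l := T)]
      rw [hpre, hdrop]
    refine ⟨r, ?_, hTeq.symm⟩
    rw [hTeq, List.nodup_append] at hTnd
    obtain ⟨-, hir, hdisj⟩ := hTnd
    rw [List.nodup_cons] at hir
    refine (List.perm_ext_iff_of_nodup hir.2 (Finset.nodup_toList _)).2 fun a => ?_
    simp only [Finset.mem_toList, Finset.mem_sdiff, Finset.mem_univ, true_and,
      Finset.mem_insert, List.mem_toFinset]
    constructor
    · intro ha h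
      rcases h with h | h
      · exact hir.1 (h ▸ ha)
      · exact hdisj a h a (List.mem_cons_of_mem _ ha) rfl
    · intro h
      push_neg at h
      have haT : a ∈ T := hT.mem_iff.2 (by simp [Finset.mem_toList])
      rw [hTeq] at haT
      rcases List.mem_append.1 haT with h' | h'
      · exact absurd h' h.2
      · rcases List.mem_cons.1 h' with h' | h'
        · exact absurd h' h.1
        · exact h'
  · rintro ⟨r, hr, rfl⟩
    have hrnd : r.Nodup := hr.symm.nodup (Finset.nodup_toList _)
    have hrsub : ∀ a ∈ r, a ≠ i ∧ a ∉ L := by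
      intro a ha
      have := hr.mem_iff.1 ha
      simp only [Finset.mem_toList, Finset.mem_sdiff, Finset.mem_insert, List.mem_toFinset,
        not_or] at this
      exact ⟨this.2.1, this.2.2⟩
    constructor
    · have hnd : (L ++ i :: r).Nodup := by
        rw [List.nodup_append, List.nodup_cons]
        refine ⟨hL, ⟨fun h => (hrsub i h).1 rfl, hrnd⟩, ?_⟩
        intro a haL b ha hab
        subst hab
        rcases List.mem_cons.1 ha with h | h
        · exact hiL (h ▸ haL)
        · exact (hrsub a h).2 haL
      refine (List.perm_ext_iff_of_nodup hnd (Finset.nodup_toList _)).2 fun a => ?_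
      simp only [Finset.mem_toList, Finset.mem_univ, iff_true, List.mem_append, List.mem_cons]
      by_cases h1 : a ∈ L
      · exact Or.inl h1
      by_cases h2 : a = i
      · exact Or.inr (Or.inl h2)
      · refine Or.inr (Or.inr ?_)
        exact hr.mem_iff.2 (by simp [Finset.mem_toList, h1, h2])
    · rw [List.takeWhile_append]
      have hLtw : L.takeWhile (fun x => decide (x ≠ i)) = L :=
        List.takeWhile_eq_self_iff.2 fun x hx => by
          simp only [decide_eq_true_eq]
          exact fun h => hiL (h ▸ hx)
      rw [hLtw, if_pos rfl, List.takeWhile_cons_of_neg (by simp), List.append_nil]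

private lemma fiber_card {α : Type*} [Fintype α] [DecidableEq α] (i : α)
    (L : List α) (hL : L.Nodup) (hiL : i ∉ L) :
    (Finset.filter (fun T => T.takeWhile (fun x => decide (x ≠ i)) = L)
        ((Finset.univ : Finset α).toList.permutations).toFinset).card
      = (Fintype.card α - L.length - 1).factorial := by
  rw [fiber_filter_eq i L hL hiL,
    Finset.card_image_of_injective _ (fun a b h => by
      exact List.cons_injective (List.append_cancel_left h)),
    List.toFinset_card_of_nodup (List.nodup_permutations _ (Finset.nodup_toList _)),
    List.length_permutations, Finset.length_toList,
    Finset.card_sdiff_of_subset (Finset.subset_univ _),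
    Finset.card_insert_of_notMem (by simp [hiL]),
    List.toFinset_card_of_nodup hL]
  rw [Nat.sub_sub, Finset.card_univ]

/-- The two expressions for the Nowak–Radzik value of player `i` in a generalized
characteristic function game coincide: the average, over all orderings `T` of the
full player set, of the marginal contribution `ν(T(i)·i) − ν(T(i))` (where `T(i)` is
the prefix of `T` before `i`) equals
`Σ_{C ⊆ A∖{i}} Σ_{T ∈ Π(C)} ((n−|T|−1)!/n!)·(ν(T·i) − ν(T))`. -/
theorem nowakRadzik_two_forms {α : Type*} [Fintype α] [DecidableEq α]
    (ν : List α → ℝ) (hν : ν [] = 0) (i : α) :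
    (1 / ((Fintype.card α).factorial : ℝ)) *
        ∑ T ∈ ((Finset.univ : Finset α).toList.permutations).toFinset,
          (ν (T.takeWhile (fun x => decide (x ≠ i)) ++ [i])
            - ν (T.takeWhile (fun x => decide (x ≠ i))))
      = ∑ C ∈ ((Finset.univ : Finset α).erase i).powerset,
          ∑ T ∈ C.toList.permutations.toFinset,
            (((Fintype.card α - T.length - 1).factorial : ℝ) /
                ((Fintype.card α).factorial : ℝ)) * (ν (T ++ [i]) - ν T) := by
  classical
  have hdisj : ((((Finset.univ : Finset α).erase i).powerset : Set (Finset α))).PairwiseDisjoint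
      (fun C : Finset α => C.toList.permutations.toFinset) := by
    intro C hC D hD hCD
    simp only [Finset.disjoint_left]
    intro T hTC hTD
    apply hCD
    rw [List.mem_toFinset, List.mem_permutations] at hTC hTD
    ext a
    rw [← Finset.mem_toList, ← hTC.mem_iff, hTD.mem_iff, Finset.mem_toList]
  rw [← Finset.sum_biUnion hdisj]
  set t := (((Finset.univ : Finset α).erase i).powerset).biUnion
      (fun C : Finset α => C.toList.permutations.toFinset) with ht
  have hmem : ∀ L ∈ t, L.Nodup ∧ i ∉ L := by
    intro L hL
    rw [ht, Finset.mem_biUnion] at hL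
    obtain ⟨C, hC, hLC⟩ := hL
    rw [List.mem_toFinset, List.mem_permutations] at hLC
    refine ⟨hLC.symm.nodup (Finset.nodup_toList _), fun h => ?_⟩
    have := hLC.mem_iff.1 h
    rw [Finset.mem_toList] at this
    exact (Finset.mem_erase.1 (Finset.mem_powerset.1 hC this)).1 rfl
  have hmaps : ∀ T ∈ ((Finset.univ : Finset α).toList.permutations).toFinset,
      T.takeWhile (fun x => decide (x ≠ i)) ∈ t := by
    intro T hT
    rw [List.mem_toFinset, List.mem_permutations] at hT
    have hTnd : T.Nodup := hT.symm.nodup (Finset.nodup_toList _)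
    have hnd : (T.takeWhile (fun x => decide (x ≠ i))).Nodup :=
      hTnd.sublist (List.takeWhile_sublist _)
    rw [ht, Finset.mem_biUnion]
    refine ⟨(T.takeWhile (fun x => decide (x ≠ i))).toFinset, ?_, ?_⟩
    · rw [Finset.mem_powerset]
      intro a ha
      rw [List.mem_toFinset] at ha
      have := List.mem_takeWhile_imp ha
      simp only [decide_eq_true_eq] at this
      exact Finset.mem_erase.2 ⟨this, Finset.mem_univ a⟩
    · rw [List.mem_toFinset, List.mem_permutations]
      exact (List.toFinset_toList hnd).symm
  rw [← Finset.sum_fiberwise_of_maps_to hmaps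
    (fun T => ν (T.takeWhile (fun x => decide (x ≠ i)) ++ [i])
      - ν (T.takeWhile (fun x => decide (x ≠ i)))), Finset.mul_sum]
  refine Finset.sum_congr rfl fun L hL => ?_
  obtain ⟨hLnd, hiL⟩ := hmem L hL
  have hsum : ∑ T ∈ Finset.filter
        (fun T => T.takeWhile (fun x => decide (x ≠ i)) = L)
        ((Finset.univ : Finset α).toList.permutations).toFinset,
      (ν (T.takeWhile (fun x => decide (x ≠ i)) ++ [i])
        - ν (T.takeWhile (fun x => decide (x ≠ i))))
      = ((Fintype.card α - L.length - 1).factorial : ℝ) * (ν (L ++ [i]) - ν L) := by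
    rw [Finset.sum_congr rfl (fun T hT => ?_), Finset.sum_const,
      fiber_card i L hLnd hiL, nsmul_eq_mul]
    rw [(Finset.mem_filter.1 hT).2]
  rw [hsum]
  ring
end

section
/- Let A be a finite set of players with |A| = n, let ν be a generalized characteristic function on ordered coalitions over A, and let a_i ∈ A. Then the Sánchez–Bergantiños value of a_i, defined as (1/n!) · Σ_{T ∈ Π(A)} (1/(|T(a_i)|+1)) · Σ_{l=1}^{|T(a_i)|+1} [ν((T(a_i), a_i)^l) − ν(T(a_i))], satisfies (1/n!) · Σ_{T ∈ Π(A)} (1/(|T(a_i)|+1)) · Σ_{l=1}^{|T(a_i)|+1} [ν((T(a_i), a_i)^l) − ν(T(a_i))] = Σ_{C ⊆ A∖{a_i}} Σ_{T ∈ Π(C)} ((n − |T| − 1)! / (n! · (|T|+1))) · Σ_{l=1}^{|T|+1} [ν((T, a_i)^l) − ν(T)]. -/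
open Finset

section Helpers


variable {α : Type*} [DecidableEq α]

lemma takeWhile_append_cons (i : α) (T S : List α) (hT : ∀ x ∈ T, x ≠ i) :
    (T ++ i :: S).takeWhile (fun x => decide (x ≠ i)) = T := by
  induction T with
  | nil => simp
  | cons a T ih =>
      have ha : a ≠ i := hT a List.mem_cons_self
      rw [List.cons_append, List.takeWhile_cons_of_pos (by simp [ha]),
        ih (fun x hx => hT x (List.mem_cons_of_mem _ hx))]

lemma decomp (i : α) (P : List α) (hi : i ∈ P) :
    P = P.takeWhile (fun x => decide (x ≠ i)) ++
        i :: (P.dropWhile (fun x => decide (x ≠ i))).tail := by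
  set p : α → Bool := fun x => decide (x ≠ i) with hp
  have hne : P.dropWhile p ≠ [] := by
    intro h
    have h2 : P.takeWhile p = P := by
      have := List.takeWhile_append_dropWhile (p := p) (l := P)
      rwa [h, List.append_nil] at this
    have := List.mem_takeWhile_imp (p := p) (l := P) (x := i) (by rw [h2]; exact hi)
    simp [hp] at this
  have hhead : (P.dropWhile p).head hne = i := by
    have := List.head_dropWhile_not p (l := P) hne
    simpa [hp] using this
  have hd : P.dropWhile p = i :: (P.dropWhile p).tail := by
    conv_lhs => rw [← List.cons_head_tail hne]
    rw [hhead]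
  conv_lhs => rw [← List.takeWhile_append_dropWhile (p := p) (l := P), hd]

lemma dropWhile_append_cons (i : α) (T S : List α) (hT : ∀ x ∈ T, x ≠ i) :
    (T ++ i :: S).dropWhile (fun x => decide (x ≠ i)) = i :: S := by
  induction T with
  | nil => simp
  | cons a T ih =>
      have ha : a ≠ i := hT a List.mem_cons_self
      rw [List.cons_append, List.dropWhile_cons_of_pos (by simp [ha]),
        ih (fun x hx => hT x (List.mem_cons_of_mem _ hx))]

lemma key_s17 [Fintype α] (g : List α → ℝ) (i : α) :
    ∑ P ∈ ((Finset.univ : Finset α).toList.permutations).toFinset,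
        g (P.takeWhile (fun x => decide (x ≠ i)))
      = ∑ C ∈ ((Finset.univ : Finset α).erase i).powerset,
          ∑ T ∈ C.toList.permutations.toFinset,
            (((Fintype.card α - T.length - 1).factorial : ℝ)) * g T := by
  classical
  set p : α → Bool := fun x => decide (x ≠ i) with hp
  set s := ((Finset.univ : Finset α).toList.permutations).toFinset with hs
  have hmem_s : ∀ P, P ∈ s ↔ P.Perm (Finset.univ : Finset α).toList := by
    intro P; simp [hs, List.mem_permutations]
  have hunodup : (Finset.univ : Finset α).toList.Nodup := Finset.nodup_toList _
  have hlenu : (Finset.univ : Finset α).toList.length = Fintype.card α := by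
    simp [Finset.length_toList]
  -- RHS as a sum over the disjoint union
  have hdisj : ((((Finset.univ : Finset α).erase i).powerset : Finset (Finset α)) : Set (Finset α)).PairwiseDisjoint
      (fun C => C.toList.permutations.toFinset) := by
    intro C1 h1 C2 h2 hne
    simp only [Function.onFun]
    rw [Finset.disjoint_left]
    intro T hT1 hT2
    apply hne
    rw [List.mem_toFinset, List.mem_permutations] at hT1 hT2
    have : C1.toList.Perm C2.toList := hT1.symm.trans hT2
    have h3 : C1.toList.toFinset = C2.toList.toFinset := List.toFinset_eq_of_perm _ _ this
    simpa [Finset.toList_toFinset] using h3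
  rw [← Finset.sum_biUnion hdisj]
  -- LHS via fibers
  have hcomp := Finset.sum_comp (s := s) g (fun P => P.takeWhile p)
  beta_reduce at hcomp
  rw [hcomp]
  -- the image equals the biUnion
  have himage : Finset.image (fun P => P.takeWhile p) s
      = (((Finset.univ : Finset α).erase i).powerset).biUnion
          (fun C => C.toList.permutations.toFinset) := by
    ext T
    simp only [Finset.mem_image, Finset.mem_biUnion, Finset.mem_powerset,
      List.mem_toFinset, List.mem_permutations]
    constructor
    · rintro ⟨P, hPs, rfl⟩
      have hP : P.Perm (Finset.univ : Finset α).toList := (hmem_s P).1 hPs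
      have hPnd : P.Nodup := hP.nodup_iff.2 hunodup
      have hTnd : (P.takeWhile p).Nodup := (List.takeWhile_sublist p).nodup hPnd
      have hiT : i ∉ P.takeWhile p := by
        intro h
        have := List.mem_takeWhile_imp h
        simp [hp] at this
      refine ⟨(P.takeWhile p).toFinset, ?_, ?_⟩
      · intro x hx
        rw [List.mem_toFinset] at hx
        exact Finset.mem_erase.2 ⟨by rintro rfl; exact hiT hx, Finset.mem_univ x⟩
      · rw [List.perm_ext_iff_of_nodup hTnd (Finset.nodup_toList _)]
        intro a; simp [Finset.mem_toList, List.mem_toFinset]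
    · rintro ⟨C, hC, hTC⟩
      have hTnd : T.Nodup := hTC.nodup_iff.2 (Finset.nodup_toList _)
      have hiT : i ∉ T := by
        intro h
        have : i ∈ C.toList := hTC.mem_iff.1 h
        rw [Finset.mem_toList] at this
        exact (Finset.mem_erase.1 (hC this)).1 rfl
      set S := ((Finset.univ : Finset α) \ insert i T.toFinset).toList with hS
      refine ⟨T ++ i :: S, ?_, takeWhile_append_cons i T S (fun x hx => by rintro rfl; exact hiT hx)⟩
      rw [hmem_s]
      have hSnd : S.Nodup := Finset.nodup_toList _
      have hSmem : ∀ x, x ∈ S ↔ x ∉ insert i T.toFinset := by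
        intro x; rw [hS, Finset.mem_toList, Finset.mem_sdiff]
        simp
      have hPnd : (T ++ i :: S).Nodup := by
        rw [List.nodup_append]
        refine ⟨hTnd, ?_, ?_⟩
        · rw [List.nodup_cons]
          exact ⟨fun h => (hSmem i).1 h (Finset.mem_insert_self _ _), hSnd⟩
        · intro x hxT y h hxy
          subst hxy
          rcases List.mem_cons.mp h with rfl | hxS
          · exact hiT hxT
          · exact (hSmem x).1 hxS (Finset.mem_insert_of_mem (List.mem_toFinset.2 hxT))
      rw [List.perm_ext_iff_of_nodup hPnd hunodup]
      intro a
      simp only [List.mem_append, List.mem_cons, Finset.mem_toList, Finset.mem_univ, iff_true]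
      by_cases ha : a = i
      · exact Or.inr (Or.inl ha)
      · by_cases haT : a ∈ T
        · exact Or.inl haT
        · refine Or.inr (Or.inr ((hSmem a).2 ?_))
          simp [ha, haT]
  rw [himage]
  apply Finset.sum_congr rfl
  intro T hT
  -- compute the fiber cardinality
  have hTim : T ∈ Finset.image (fun P => List.takeWhile p P) s := himage ▸ hT
  rw [Finset.mem_image] at hTim
  obtain ⟨P0, hP0s, hP0T⟩ := hTim
  have hP0 : P0.Perm (Finset.univ : Finset α).toList := (hmem_s P0).1 hP0s
  have hiP0 : i ∈ P0 := hP0.mem_iff.2 (by rw [Finset.mem_toList]; exact Finset.mem_univ i)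
  have hdec : P0 = T ++ i :: (P0.dropWhile p).tail := by
    have := decomp i P0 hiP0; rwa [hP0T] at this
  set S0 := (P0.dropWhile p).tail with hS0
  have hTi : ∀ x ∈ T, x ≠ i := fun x hx => by
    rw [← hP0T] at hx
    simpa [hp] using List.mem_takeWhile_imp hx
  have hlen : S0.length = Fintype.card α - T.length - 1 := by
    have h1 : P0.length = Fintype.card α := by rw [hP0.length_eq, hlenu]
    have h2 : P0.length = T.length + (S0.length + 1) := by
      conv_lhs => rw [hdec]
      simp [List.length_append]
    omega
  have hS0nd : S0.Nodup := by
    have hPnd : P0.Nodup := hP0.nodup_iff.2 hunodup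
    exact ((List.tail_sublist _).trans (List.dropWhile_sublist p)).nodup hPnd
  have hcard : (Finset.filter (fun P => List.takeWhile p P = T) s).card
      = S0.permutations.toFinset.card := by
    apply Finset.card_nbij' (fun P => (P.dropWhile p).tail) (fun S => T ++ i :: S)
    · intro P hPf
      rw [Finset.mem_coe, Finset.mem_filter] at hPf
      obtain ⟨hPs, hPT⟩ := hPf
      have hPperm : P.Perm (Finset.univ : Finset α).toList := (hmem_s P).1 hPs
      have hiP : i ∈ P := hPperm.mem_iff.2 (by rw [Finset.mem_toList]; exact Finset.mem_univ i)
      have hPdec : P = T ++ i :: (P.dropWhile p).tail := by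
        have := decomp i P hiP; rwa [hPT] at this
      rw [Finset.mem_coe, List.mem_toFinset, List.mem_permutations]
      have hpp : (T ++ i :: (P.dropWhile p).tail).Perm (T ++ i :: S0) := by
        rw [← hPdec, ← hdec]; exact hPperm.trans hP0.symm
      exact (List.perm_cons i).1 ((List.perm_append_left_iff T).1 hpp)
    · intro S hSt
      rw [Finset.mem_coe, List.mem_toFinset, List.mem_permutations] at hSt
      rw [Finset.mem_coe, Finset.mem_filter]
      refine ⟨?_, takeWhile_append_cons i T S hTi⟩
      rw [hmem_s]
      have hpp : (T ++ i :: S).Perm (T ++ i :: S0) :=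
        (List.perm_append_left_iff T).2 ((List.perm_cons i).2 hSt)
      exact hpp.trans (hdec ▸ hP0)
    · intro P hPf
      rw [Finset.mem_coe, Finset.mem_filter] at hPf
      obtain ⟨hPs, hPT⟩ := hPf
      have hPperm : P.Perm (Finset.univ : Finset α).toList := (hmem_s P).1 hPs
      have hiP : i ∈ P := hPperm.mem_iff.2 (by rw [Finset.mem_toList]; exact Finset.mem_univ i)
      have hPdec := decomp i P hiP
      rw [hPT] at hPdec
      exact hPdec.symm
    · intro S hSt
      simp only [hp, dropWhile_append_cons i T S hTi, List.tail_cons]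
  have hfc : (Finset.filter (fun P => List.takeWhile p P = T) s).card
      = (Fintype.card α - T.length - 1).factorial := by
    rw [hcard, List.toFinset_card_of_nodup (List.nodup_permutations _ hS0nd),
      List.length_permutations, hlen]
  rw [hfc, nsmul_eq_mul]

end Helpers

/-- The two expressions for the Sánchez–Bergantiños value of player `i` in a
generalized characteristic function game coincide: the average over all orderings
`T` of the full player set of the averaged-insertion marginal contribution
`(1/(|T(i)|+1))·Σ_{l=1}^{|T(i)|+1} (ν((T(i),i)^l) − ν(T(i)))` equals
`Σ_{C ⊆ A∖{i}} Σ_{T ∈ Π(C)} ((n−|T|−1)!/(n!·(|T|+1)))·Σ_{l=1}^{|T|+1} (ν((T,i)^l) − ν(T))`. -/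
theorem sanchezBergantinos_two_forms {α : Type*} [Fintype α] [DecidableEq α]
    (ν : List α → ℝ) (hν : ν [] = 0) (i : α) :
    (1 / ((Fintype.card α).factorial : ℝ)) *
        ∑ T ∈ ((Finset.univ : Finset α).toList.permutations).toFinset,
          ((1 : ℝ) / ((T.takeWhile (fun x => decide (x ≠ i))).length + 1)) *
            ∑ l ∈ Finset.Icc 1 ((T.takeWhile (fun x => decide (x ≠ i))).length + 1),
              (ν ((T.takeWhile (fun x => decide (x ≠ i))).insertIdx (l - 1) i)
                - ν (T.takeWhile (fun x => decide (x ≠ i))))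
      = ∑ C ∈ ((Finset.univ : Finset α).erase i).powerset,
          ∑ T ∈ C.toList.permutations.toFinset,
            (((Fintype.card α - T.length - 1).factorial : ℝ) /
                (((Fintype.card α).factorial : ℝ) * ((T.length : ℝ) + 1))) *
              ∑ l ∈ Finset.Icc 1 (T.length + 1),
                (ν (T.insertIdx (l - 1) i) - ν T) := by
  have h := key_s17 (fun L => ((1 : ℝ) / ((L.length : ℝ) + 1)) *
      ∑ l ∈ Finset.Icc 1 (L.length + 1), (ν (L.insertIdx (l - 1) i) - ν L)) i
  beta_reduce at h
  rw [h, Finset.mul_sum]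
  apply Finset.sum_congr rfl
  intro C _
  rw [Finset.mul_sum]
  apply Finset.sum_congr rfl
  intro T _
  have h1 : ((Fintype.card α).factorial : ℝ) ≠ 0 := Nat.cast_ne_zero.2 (Nat.factorial_ne_zero _)
  have h2 : ((T.length : ℝ) + 1) ≠ 0 := by positivity
  field_simp
end

section
/- Let A be a finite set of players with |A| = n ≥ 1 and fix an ordering T* of all of A. Define the generalized characteristic function ν by ν(T) = 1 if T = T* and ν(T) = 0 otherwise. Then the Nowak–Radzik value of the last player of T* equals 1/n!, the Nowak–Radzik value of every other player equals 0, and the Sánchez–Bergantiños value of every player equals 1/(n! · n). -/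
open Finset

private lemma aux_takeWhile {α : Type*} [DecidableEq α] (i : α) (L₁ L₂ : List α)
    (h : i ∉ L₁) :
    (L₁ ++ i :: L₂).takeWhile (fun x => decide (x ≠ i)) = L₁ := by
  induction L₁ with
  | nil => simp [List.takeWhile_cons]
  | cons a t ih =>
    simp only [List.mem_cons, not_or] at h
    have hstep : (a :: (t ++ i :: L₂)).takeWhile (fun x => decide (x ≠ i))
        = a :: (t ++ i :: L₂).takeWhile (fun x => decide (x ≠ i)) :=
      List.takeWhile_cons_of_pos (by
        simp only [ne_eq, decide_eq_true_eq]
        exact fun hh => h.1 hh.symm)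
    rw [List.cons_append, hstep, ih h.2]

private lemma aux_cons_inj {α : Type*} (i : α) :
    ∀ {L₁ L₂ R₁ R₂ : List α}, i ∉ L₁ → i ∉ L₂ →
      L₁ ++ i :: R₁ = L₂ ++ i :: R₂ → L₁ = L₂ ∧ R₁ = R₂ := by
  intro L₁
  induction L₁ with
  | nil =>
    intro L₂ R₁ R₂ _ h2 h
    cases L₂ with
    | nil => simpa using h
    | cons b t =>
      simp only [List.nil_append, List.cons_append, List.cons.injEq] at h
      exact absurd (h.1 ▸ (List.mem_cons_self (a := b) (l := t))) h2
  | cons a t ih =>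
    intro L₂ R₁ R₂ h1 h2 h
    cases L₂ with
    | nil =>
      simp only [List.nil_append, List.cons_append, List.cons.injEq] at h
      exact absurd (h.1 ▸ (List.mem_cons_self (a := a) (l := t))) h1
    | cons b s =>
      simp only [List.cons_append, List.cons.injEq] at h
      simp only [List.mem_cons, not_or] at h1 h2
      obtain ⟨hts, hR⟩ := ih h1.2 h2.2 h.2
      exact ⟨by rw [h.1, hts], hR⟩

private lemma aux_insertIdx {α : Type*} (a : α) :
    ∀ (n : ℕ) (l : List α), n ≤ l.length →
      l.insertIdx n a = l.take n ++ a :: l.drop n := by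
  intro n
  induction n with
  | zero => intro l _; simp
  | succ n ih =>
    intro l hl
    cases l with
    | nil => simp at hl
    | cons b t =>
      simp only [List.length_cons, Nat.succ_le_succ_iff] at hl
      simp [List.insertIdx_succ_cons, ih t hl]

/-- For the generalized characteristic function that gives value `1` exactly to one
fixed ordering `T*` of all players (and `0` otherwise): the Nowak–Radzik value of the
last player of `T*` is `1/n!`, the Nowak–Radzik value of every other player is `0`,
and the Sánchez–Bergantiños value of every player is `1/(n!·n)`. -/
theorem values_of_single_order_game {α : Type*} [Fintype α] [DecidableEq α]
    (hn : 1 ≤ Fintype.card α)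
    (Tstar : List α) (hnd : Tstar.Nodup) (hall : ∀ a : α, a ∈ Tstar)
    (ν : List α → ℝ) (hν : ∀ T : List α, ν T = if T = Tstar then 1 else 0)
    (φNR φSB : α → ℝ)
    (hNR : ∀ i : α, φNR i
      = (1 / ((Fintype.card α).factorial : ℝ)) *
          ∑ T ∈ ((Finset.univ : Finset α).toList.permutations).toFinset,
            (ν (T.takeWhile (fun x => decide (x ≠ i)) ++ [i])
              - ν (T.takeWhile (fun x => decide (x ≠ i)))))
    (hSB : ∀ i : α, φSB i
      = (1 / ((Fintype.card α).factorial : ℝ)) *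
          ∑ T ∈ ((Finset.univ : Finset α).toList.permutations).toFinset,
            ((1 : ℝ) / ((T.takeWhile (fun x => decide (x ≠ i))).length + 1)) *
              ∑ l ∈ Finset.Icc 1 ((T.takeWhile (fun x => decide (x ≠ i))).length + 1),
                (ν ((T.takeWhile (fun x => decide (x ≠ i))).insertIdx (l - 1) i)
                  - ν (T.takeWhile (fun x => decide (x ≠ i))))) :
    (∀ i : α, Tstar.getLast? = some i →
        φNR i = 1 / ((Fintype.card α).factorial : ℝ)) ∧
    (∀ i : α, Tstar.getLast? ≠ some i → φNR i = 0) ∧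
    (∀ i : α, φSB i
        = 1 / (((Fintype.card α).factorial : ℝ) * (Fintype.card α : ℝ))) := by
  classical
  set n := Fintype.card α with hncard
  -- Basic facts about Tstar
  have hTs_perm : List.Perm Tstar (Finset.univ : Finset α).toList := by
    rw [List.perm_ext_iff_of_nodup hnd (Finset.nodup_toList _)]
    intro a
    simp [hall a, Finset.mem_toList]
  have hTs_len : Tstar.length = n := by
    have := hTs_perm.length_eq
    rw [this, Finset.length_toList, Finset.card_univ]
  -- Membership in the permutation finset
  have hmem : ∀ T : List α,
      T ∈ ((Finset.univ : Finset α).toList.permutations).toFinset ↔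
        List.Perm T (Finset.univ : Finset α).toList := by
    intro T
    rw [List.mem_toFinset, List.mem_permutations]
  have hTs_mem : Tstar ∈ ((Finset.univ : Finset α).toList.permutations).toFinset :=
    (hmem Tstar).mpr hTs_perm
  -- Structure of any T in the finset, relative to player i
  have hdecomp : ∀ (i : α) (T : List α),
      T ∈ ((Finset.univ : Finset α).toList.permutations).toFinset →
        ∃ L₁ L₂ : List α, T = L₁ ++ i :: L₂ ∧ i ∉ L₁ ∧ i ∉ L₂ ∧
          T.takeWhile (fun x => decide (x ≠ i)) = L₁ ∧
          L₁.length + 1 + L₂.length = n := by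
    intro i T hT
    rw [hmem] at hT
    have hiT : i ∈ T := hT.mem_iff.mpr (by simp)
    have hTnd : T.Nodup := hT.nodup_iff.mpr (Finset.nodup_toList _)
    obtain ⟨L₁, L₂, rfl⟩ := List.append_of_mem hiT
    have hnd' := hTnd
    rw [List.nodup_append] at hnd'
    have hiL₁ : i ∉ L₁ := fun h => hnd'.2.2 i h i (List.mem_cons_self (a := i) (l := L₂)) rfl
    have hiL₂ : i ∉ L₂ := by
      have := hnd'.2.1
      rw [List.nodup_cons] at this
      exact this.1
    refine ⟨L₁, L₂, rfl, hiL₁, hiL₂, aux_takeWhile i L₁ L₂ hiL₁, ?_⟩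
    have := hT.length_eq
    simp only [List.length_append, List.length_cons, Finset.length_toList,
      Finset.card_univ] at this
    omega
  -- takeWhile is never Tstar (length reasons)
  have hprefix_ne : ∀ (i : α) (T : List α),
      T ∈ ((Finset.univ : Finset α).toList.permutations).toFinset →
        T.takeWhile (fun x => decide (x ≠ i)) ≠ Tstar := by
    intro i T hT h
    obtain ⟨L₁, L₂, _, _, _, htw, hlen⟩ := hdecomp i T hT
    rw [htw] at h
    have : L₁.length = n := by rw [h, hTs_len]
    omega
  have hfactne : ((n.factorial : ℝ)) ≠ 0 := Nat.cast_ne_zero.mpr n.factorial_ne_zero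
  refine ⟨?_, ?_, ?_⟩
  · -- NR value of the last player
    intro i hi
    have hTs_ne : Tstar ≠ [] := by
      intro h; rw [h] at hi; simp at hi
    have hgl : Tstar.getLast hTs_ne = i := by
      have := List.getLast?_eq_getLast (l := Tstar) hTs_ne
      rw [hi] at this
      exact (Option.some_inj.mp this).symm
    have hlast : Tstar.dropLast ++ [i] = Tstar := by
      rw [← hgl]
      exact List.dropLast_append_getLast hTs_ne
    have hiD : i ∉ Tstar.dropLast := by
      intro h
      have hnd' := hnd
      conv at hnd' => rw [← hlast]
      rw [List.nodup_append] at hnd'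
      exact hnd'.2.2 i h i (List.mem_cons_self (a := i) (l := [])) rfl
    rw [hNR i]
    have hsum : ∑ T ∈ ((Finset.univ : Finset α).toList.permutations).toFinset,
        (ν (T.takeWhile (fun x => decide (x ≠ i)) ++ [i])
          - ν (T.takeWhile (fun x => decide (x ≠ i))))
        = ∑ T ∈ ((Finset.univ : Finset α).toList.permutations).toFinset,
            (if T = Tstar then (1 : ℝ) else 0) := by
      refine Finset.sum_congr rfl fun T hT => ?_
      have hpne := hprefix_ne i T hT
      obtain ⟨L₁, L₂, rfl, hiL₁, hiL₂, htw, hlen⟩ := hdecomp i T hT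
      rw [htw] at hpne
      rw [hν, hν, htw, if_neg hpne, sub_zero]
      by_cases hTeq : L₁ ++ i :: L₂ = Tstar
      · rw [if_pos hTeq]
        have h2 : L₁ ++ i :: L₂ = Tstar.dropLast ++ i :: ([] : List α) := by
          rw [hTeq]; exact hlast.symm
        obtain ⟨h3, h4⟩ := aux_cons_inj i hiL₁ hiD h2
        rw [if_pos (by rw [h3]; exact hlast)]
      · rw [if_neg hTeq, if_neg]
        intro h
        have hL₁len : L₁.length + 1 = n := by
          have := congrArg List.length h
          simp only [List.length_append, List.length_cons, List.length_nil,
            hTs_len] at this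
          omega
        have hL₂nil : L₂ = [] := by
          have : L₂.length = 0 := by omega
          exact List.length_eq_zero_iff.mp this
        apply hTeq
        rw [hL₂nil, ← h]
    rw [hsum, Finset.sum_ite_eq' _ Tstar (fun _ => (1:ℝ)), if_pos hTs_mem]
    rw [mul_one]
  · -- NR value of non-last players
    intro i hi
    rw [hNR i]
    have hsum : ∑ T ∈ ((Finset.univ : Finset α).toList.permutations).toFinset,
        (ν (T.takeWhile (fun x => decide (x ≠ i)) ++ [i])
          - ν (T.takeWhile (fun x => decide (x ≠ i)))) = 0 := by
      refine Finset.sum_eq_zero fun T hT => ?_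
      rw [hν, hν, if_neg (hprefix_ne i T hT), if_neg, sub_zero]
      intro h
      apply hi
      rw [← h, List.getLast?_concat]
    rw [hsum, mul_zero]
  · -- SB value of every player
    intro i
    -- decompose Tstar around i
    obtain ⟨S₁, S₂, hTsdec⟩ := List.append_of_mem (hall i)
    have hnd' := hnd
    rw [hTsdec, List.nodup_append] at hnd'
    have hiS₁ : i ∉ S₁ := fun h => hnd'.2.2 i h i (List.mem_cons_self (a := i) (l := S₂)) rfl
    have hiS₂ : i ∉ S₂ := by
      have := hnd'.2.1
      rw [List.nodup_cons] at this
      exact this.1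
    have hiS : i ∉ S₁ ++ S₂ := by
      simp only [List.mem_append, not_or]
      exact ⟨hiS₁, hiS₂⟩
    have hSlen : S₁.length + 1 + S₂.length = n := by
      have := congrArg List.length hTsdec
      simp only [hTs_len, List.length_append, List.length_cons] at this
      omega
    set Ti : List α := (S₁ ++ S₂) ++ [i] with hTi
    have hTi_mem : Ti ∈ ((Finset.univ : Finset α).toList.permutations).toFinset := by
      rw [hmem]
      refine List.Perm.trans ?_ hTs_perm
      refine List.Perm.trans (List.perm_append_singleton i (S₁ ++ S₂)) ?_
      rw [hTsdec]
      exact List.perm_middle.symm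

    have hTi_tw : Ti.takeWhile (fun x => decide (x ≠ i)) = S₁ ++ S₂ := by
      have : Ti = (S₁ ++ S₂) ++ i :: [] := rfl
      rw [this, aux_takeWhile i _ _ hiS]
    have hQlen : (S₁ ++ S₂).length = n - 1 := by
      simp only [List.length_append]; omega
    rw [hSB i]
    have hsum : ∑ T ∈ ((Finset.univ : Finset α).toList.permutations).toFinset,
        ((1 : ℝ) / ((T.takeWhile (fun x => decide (x ≠ i))).length + 1)) *
          ∑ l ∈ Finset.Icc 1 ((T.takeWhile (fun x => decide (x ≠ i))).length + 1),
            (ν ((T.takeWhile (fun x => decide (x ≠ i))).insertIdx (l - 1) i)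
              - ν (T.takeWhile (fun x => decide (x ≠ i))))
        = ∑ T ∈ ((Finset.univ : Finset α).toList.permutations).toFinset,
            (if T = Ti then (1 : ℝ) / (n : ℝ) else 0) := by
      refine Finset.sum_congr rfl fun T hT => ?_
      obtain ⟨L₁, L₂, hTdec, hiL₁, hiL₂, htw, hlen⟩ := hdecomp i T hT
      by_cases hTeq : T = Ti
      · rw [if_pos hTeq]
        subst hTeq
        rw [hTi_tw]
        have hinner : ∑ l ∈ Finset.Icc 1 ((S₁ ++ S₂).length + 1),
            (ν ((S₁ ++ S₂).insertIdx (l - 1) i) - ν (S₁ ++ S₂))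
            = ∑ l ∈ Finset.Icc 1 ((S₁ ++ S₂).length + 1),
                (if l = S₁.length + 1 then (1:ℝ) else 0) := by
          refine Finset.sum_congr rfl fun l hl => ?_
          rw [Finset.mem_Icc] at hl
          have hpne : S₁ ++ S₂ ≠ Tstar := by
            intro h
            have := congrArg List.length h
            rw [hQlen, hTs_len] at this
            omega
          rw [hν, hν, if_neg hpne, sub_zero]
          have hl1 : l - 1 ≤ (S₁ ++ S₂).length := by omega
          rw [aux_insertIdx i (l-1) (S₁ ++ S₂) hl1]
          by_cases hcase : l = S₁.length + 1
          · rw [if_pos hcase, if_pos]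
            have hls : l - 1 = S₁.length := by omega
            rw [hls, List.take_left, List.drop_left]
            exact hTsdec.symm
          · rw [if_neg hcase, if_neg]
            intro h
            rw [hTsdec] at h
            have hitake : i ∉ (S₁ ++ S₂).take (l-1) :=
              fun hmem' => hiS (List.mem_of_mem_take hmem')
            obtain ⟨h3, _⟩ := aux_cons_inj i hitake hiS₁ h
            apply hcase
            have := congrArg List.length h3
            rw [List.length_take] at this
            omega
        have hmemIcc : S₁.length + 1 ∈ Finset.Icc 1 ((S₁ ++ S₂).length + 1) := by
          rw [Finset.mem_Icc, List.length_append]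
          omega
        rw [hinner, Finset.sum_ite_eq' _ (S₁.length + 1) (fun _ => (1:ℝ)),
          if_pos hmemIcc, mul_one, hQlen]
        congr 1
        have h' : (n - 1) + 1 = n := by omega
        rw [← h']
        push_cast
        ring
      · rw [if_neg hTeq]
        have hinner : ∑ l ∈ Finset.Icc 1 ((T.takeWhile (fun x => decide (x ≠ i))).length + 1),
            (ν ((T.takeWhile (fun x => decide (x ≠ i))).insertIdx (l - 1) i)
              - ν (T.takeWhile (fun x => decide (x ≠ i)))) = 0 := by
          refine Finset.sum_eq_zero fun l hl => ?_
          rw [Finset.mem_Icc] at hl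
          rw [hν, hν, if_neg (hprefix_ne i T hT), sub_zero, if_neg]
          intro h
          rw [htw] at h hl
          have hl1 : l - 1 ≤ L₁.length := by omega
          rw [aux_insertIdx i (l-1) L₁ hl1, hTsdec] at h
          have hitake : i ∉ L₁.take (l-1) :=
            fun hmem' => hiL₁ (List.mem_of_mem_take hmem')
          obtain ⟨h3, h4⟩ := aux_cons_inj i hitake hiS₁ h
          -- L₁ = S₁ ++ S₂ and L₂ = []
          have hL₁ : L₁ = S₁ ++ S₂ := by
            conv_lhs => rw [← List.take_append_drop (l-1) L₁]
            rw [h3, h4]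
          have hL₁len : L₁.length = n - 1 := by rw [hL₁]; exact hQlen
          have hL₂nil : L₂ = [] := by
            have : L₂.length = 0 := by omega
            exact List.length_eq_zero_iff.mp this
          apply hTeq
          rw [hTdec, hL₂nil, hL₁, hTi]
        rw [hinner, mul_zero]
    rw [hsum, Finset.sum_ite_eq' _ Ti (fun _ => (1:ℝ)/(n:ℝ)), if_pos hTi_mem,
      div_mul_div_comm, one_mul]
end
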